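/- arXiv:1606.04690 — 15 statements merged into one kernel-verified Lean document; each statement's English description precedes it below -/
import Mathlib

section
/- Let α ≥ 1 and β ≥ 1 be real numbers. Then for every z in the open unit disk 𝔻, the normalized Mittag-Leffler function satisfies |𝔼_{α,β}(z)| ≤ (β² + β + 1)/β². -/
open Real

/-- The normalized Mittag-Leffler function
`𝔼_{α,β}(z) = z + ∑_{n=1}^∞ (Γ(β)/Γ(αn+β)) z^{n+1}`. -/
noncomputable def normalizedMittagLeffler (α β : ℝ) (z : ℂ) : ℂ :=
  z + ∑' n : ℕ, ((Real.Gamma β / Real.Gamma (α * (n + 1) + β) : ℝ) : ℂ) * z ^ (n + 2)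


lemma gamma_lb (β : ℝ) (hβ : 1 ≤ β) (n : ℕ) :
    β * (β + 1) ^ n * Real.Gamma β ≤ Real.Gamma ((n : ℝ) + 1 + β) := by
  induction n with
  | zero =>
      simp only [pow_zero, mul_one, Nat.cast_zero, zero_add]
      rw [add_comm, Real.Gamma_add_one (by linarith)]
  | succ n ih =>
      have h1 : ((n : ℝ) + 1 + 1 + β) = ((n : ℝ) + 1 + β) + 1 := by ring
      have h2 : Real.Gamma ((n : ℝ) + 1 + 1 + β) = ((n : ℝ) + 1 + β) * Real.Gamma ((n : ℝ) + 1 + β) := by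
        rw [h1, Real.Gamma_add_one (by positivity)]
      push_cast
      rw [h2]
      have hfac : (β + 1) ≤ (n : ℝ) + 1 + β := by
        have : (0:ℝ) ≤ n := Nat.cast_nonneg n
        linarith
      have hpos : 0 ≤ β * (β + 1) ^ n * Real.Gamma β := by
        have := Real.Gamma_pos_of_pos (show (0:ℝ) < β by linarith)
        positivity
      calc β * (β + 1) ^ (n + 1) * Real.Gamma β
          = (β + 1) * (β * (β + 1) ^ n * Real.Gamma β) := by ring
        _ ≤ ((n : ℝ) + 1 + β) * Real.Gamma ((n : ℝ) + 1 + β) := by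
            apply mul_le_mul hfac ih hpos (by linarith)

lemma coeff_le (α β : ℝ) (hα : 1 ≤ α) (hβ : 1 ≤ β) (n : ℕ) :
    Real.Gamma β / Real.Gamma (α * (n + 1) + β) ≤ (1 / β) * (1 / (β + 1)) ^ n := by
  have hβ0 : (0:ℝ) < β := by linarith
  have hΓβ := Real.Gamma_pos_of_pos hβ0
  have hmono := Real.Gamma_strictMonoOn_Ici.monotoneOn
  have hn1 : ((n:ℝ) + 1 + β) ∈ Set.Ici (2:ℝ) := by
    simp only [Set.mem_Ici]
    have : (0:ℝ) ≤ n := Nat.cast_nonneg n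
    linarith
  have hαn : (α * (n + 1) + β) ∈ Set.Ici (2:ℝ) := by
    simp only [Set.mem_Ici]
    have h1 : (1:ℝ) * (n+1) ≤ α * (n+1) := by
      apply mul_le_mul_of_nonneg_right hα; positivity
    have : (0:ℝ) ≤ n := Nat.cast_nonneg n
    nlinarith
  have hle : ((n:ℝ) + 1 + β) ≤ α * (n + 1) + β := by
    have h1 : (1:ℝ) * (n+1) ≤ α * (n+1) := by
      apply mul_le_mul_of_nonneg_right hα; positivity
    linarith
  have hΓle : Real.Gamma ((n:ℝ) + 1 + β) ≤ Real.Gamma (α * (n + 1) + β) :=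
    hmono hn1 hαn hle
  have hlb := gamma_lb β hβ n
  have hden : (0:ℝ) < β * (β + 1) ^ n * Real.Gamma β := by positivity
  have hΓpos : (0:ℝ) < Real.Gamma (α * (n + 1) + β) := lt_of_lt_of_le hden (hlb.trans hΓle)
  rw [div_le_iff₀ hΓpos]
  have : (1 / β) * (1 / (β + 1)) ^ n * (β * (β + 1) ^ n * Real.Gamma β) = Real.Gamma β := by
    field_simp
    rw [← mul_pow, one_div, inv_mul_cancel₀ (ne_of_gt (by linarith)), one_pow]
  calc Real.Gamma β = (1 / β) * (1 / (β + 1)) ^ n * (β * (β + 1) ^ n * Real.Gamma β) := this.symm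
    _ ≤ (1 / β) * (1 / (β + 1)) ^ n * Real.Gamma (α * (n + 1) + β) := by
        apply mul_le_mul_of_nonneg_left (hlb.trans hΓle); positivity

theorem abs_normalizedMittagLeffler_le (α β : ℝ) (hα : 1 ≤ α) (hβ : 1 ≤ β)
    (z : ℂ) (hz : ‖z‖ < 1) :
    ‖normalizedMittagLeffler α β z‖ ≤ (β ^ 2 + β + 1) / β ^ 2 := by
  have hβ0 : (0:ℝ) < β := by linarith
  have hr : |1 / (β + 1)| < 1 := by
    rw [abs_of_pos (by positivity)]
    rw [div_lt_one (by linarith)]; linarith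
  -- bound on each term norm
  set f : ℕ → ℂ := fun n => ((Real.Gamma β / Real.Gamma (α * (n + 1) + β) : ℝ) : ℂ) * z ^ (n + 2)
  set g : ℕ → ℝ := fun n => (1 / β) * (1 / (β + 1)) ^ n
  have hbound : ∀ n, ‖f n‖ ≤ g n := by
    intro n
    have hΓpos : 0 < Real.Gamma (α * (n + 1) + β) := by
      apply Real.Gamma_pos_of_pos
      have h1 : (1:ℝ) * (n+1) ≤ α * (n+1) := by
        apply mul_le_mul_of_nonneg_right hα; positivity
      have : (0:ℝ) ≤ n := Nat.cast_nonneg n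
      nlinarith
    have hc0 : 0 ≤ Real.Gamma β / Real.Gamma (α * (n + 1) + β) := by
      have := Real.Gamma_pos_of_pos hβ0; positivity
    have hz1 : ‖z ^ (n + 2)‖ ≤ 1 := by
      rw [norm_pow]
      exact pow_le_one₀ (norm_nonneg z) hz.le
    calc ‖f n‖ = |Real.Gamma β / Real.Gamma (α * (n + 1) + β)| * ‖z ^ (n + 2)‖ := by
          simp only [f]; rw [norm_mul, Complex.norm_real, Real.norm_eq_abs]
      _ ≤ (Real.Gamma β / Real.Gamma (α * (n + 1) + β)) * 1 := by
          rw [abs_of_nonneg hc0]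
          exact mul_le_mul_of_nonneg_left hz1 hc0
      _ = Real.Gamma β / Real.Gamma (α * (n + 1) + β) := mul_one _
      _ ≤ g n := coeff_le α β hα hβ n
  have hsumg : Summable g := by
    apply Summable.mul_left
    exact summable_geometric_of_lt_one (by positivity) (by rw [div_lt_one (by linarith)]; linarith)
  have hsumf : Summable fun n => ‖f n‖ :=
    Summable.of_nonneg_of_le (fun n => norm_nonneg _) hbound hsumg
  have htsum : ‖∑' n, f n‖ ≤ ∑' n, g n := by
    calc ‖∑' n, f n‖ ≤ ∑' n, ‖f n‖ := norm_tsum_le_tsum_norm hsumf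
      _ ≤ ∑' n, g n := Summable.tsum_le_tsum hbound hsumf hsumg
  have hgval : ∑' n, g n = (β + 1) / β ^ 2 := by
    have : ∑' n : ℕ, (1 / (β + 1)) ^ n = (1 - 1/(β+1))⁻¹ :=
      tsum_geometric_of_lt_one (by positivity) (by rw [div_lt_one (by linarith)]; linarith)
    rw [show (∑' n, g n) = (1/β) * ∑' n : ℕ, (1 / (β + 1)) ^ n from tsum_mul_left, this]
    rw [eq_div_iff (by positivity), one_sub_div (by linarith : β + (1:ℝ) ≠ 0)]
    field_simp
    rw [add_sub_cancel_right]; exact div_self hβ0.ne'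
  rw [normalizedMittagLeffler]
  calc ‖z + ∑' n, f n‖ ≤ ‖z‖ + ‖∑' n, f n‖ := norm_add_le _ _
    _ ≤ 1 + (β + 1) / β ^ 2 := by rw [← hgval]; exact add_le_add hz.le htsum
    _ = (β ^ 2 + β + 1) / β ^ 2 := by field_simp; ring
end

section
/- Let α ≥ 1 and β ≥ 1 be real numbers. Then for every z in the open unit disk 𝔻, the derivative of the normalized Mittag-Leffler function satisfies |𝔼'_{α,β}(z)| ≤ (β² + 3β + 2)/β², where 𝔼'_{α,β}(z) = 1 + Σ_{n=1}^∞ (n+1) (Γ(β)/Γ(αn+β)) z^{n}. -/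
/-- The derivative of the normalized Mittag-Leffler function
`𝔼'_{α,β}(z) = 1 + ∑_{n=1}^∞ (n+1) (Γ(β)/Γ(αn+β)) z^{n}`. -/
noncomputable def normalizedMittagLefflerDeriv (α β : ℝ) (z : ℂ) : ℂ :=
  1 + ∑' n : ℕ, ((n : ℂ) + 2) * ((Real.Gamma β / Real.Gamma (α * (n + 1) + β) : ℝ) : ℂ)
      * z ^ (n + 1)

/-- The bounding sequence for the series terms. -/
noncomputable def mlBound (β : ℝ) : ℕ → ℝ
  | 0 => 2 / β
  | (n+1) => ((n : ℝ) + 3) * ((β + 2)⁻¹) ^ n / (β * (β + 1))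

lemma gamma_add_nat (β : ℝ) (hβ : 0 < β) (m : ℕ) :
    Real.Gamma (β + m) = (∏ k ∈ Finset.range m, (β + k)) * Real.Gamma β := by
  induction m with
  | zero => simp
  | succ n ih =>
    have h : β + (n + 1 : ℕ) = (β + n) + 1 := by push_cast; ring
    rw [h, Real.Gamma_add_one (by positivity), ih, Finset.prod_range_succ]
    ring

lemma gamma_ratio_le (α β : ℝ) (hα : 1 ≤ α) (hβ : 1 ≤ β) (m : ℕ) :
    Real.Gamma β / Real.Gamma (α * (m + 1) + β)
      ≤ 1 / ∏ k ∈ Finset.range (m + 1), (β + k) := by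
  have hβ0 : (0:ℝ) < β := lt_of_lt_of_le one_pos hβ
  have hP : (0:ℝ) < ∏ k ∈ Finset.range (m + 1), (β + k) := by
    apply Finset.prod_pos; intro k _; positivity
  have hΓβ : 0 < Real.Gamma β := Real.Gamma_pos_of_pos hβ0
  have hm1 : (1:ℝ) ≤ (m:ℝ) + 1 := by
    have := Nat.cast_nonneg (α := ℝ) m; linarith
  have h2a : (2:ℝ) ≤ β + (m + 1 : ℕ) := by push_cast; linarith
  have h2b : (2:ℝ) ≤ α * (m + 1) + β := by nlinarith
  have hmono : Real.Gamma (β + (m + 1 : ℕ)) ≤ Real.Gamma (α * (m + 1) + β) := by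
    apply Real.Gamma_strictMonoOn_Ici.monotoneOn h2a h2b
    push_cast; nlinarith
  have heq : Real.Gamma (β + (m + 1 : ℕ))
      = (∏ k ∈ Finset.range (m + 1), (β + k)) * Real.Gamma β :=
    gamma_add_nat β hβ0 (m + 1)
  have hpos : 0 < Real.Gamma (β + (m + 1 : ℕ)) := by
    rw [heq]; positivity
  calc Real.Gamma β / Real.Gamma (α * (m + 1) + β)
      ≤ Real.Gamma β / Real.Gamma (β + (m + 1 : ℕ)) :=
        div_le_div_of_nonneg_left hΓβ.le hpos hmono
    _ = 1 / ∏ k ∈ Finset.range (m + 1), (β + k) := by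
        rw [heq]; field_simp

lemma prod_lower_bound (β : ℝ) (hβ : 1 ≤ β) (n : ℕ) :
    β * (β + 1) * (β + 2) ^ n ≤ ∏ k ∈ Finset.range (n + 2), (β + k) := by
  induction n with
  | zero =>
    rw [show (0:ℕ) + 2 = 2 from rfl, Finset.prod_range_succ, Finset.prod_range_one]
    push_cast; nlinarith
  | succ n ih =>
    have h1 : (0:ℝ) < β := lt_of_lt_of_le one_pos hβ
    have hP : (0:ℝ) < ∏ k ∈ Finset.range (n + 2), (β + k) := by
      apply Finset.prod_pos; intro k _; positivity
    have h2 : β + 2 ≤ β + ((n:ℝ) + 2) := by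
      have := Nat.cast_nonneg (α := ℝ) n; linarith
    calc β * (β + 1) * (β + 2) ^ (n + 1)
        = (β * (β + 1) * (β + 2) ^ n) * (β + 2) := by ring
      _ ≤ (∏ k ∈ Finset.range (n + 2), (β + k)) * (β + ((n:ℝ) + 2)) := by
          apply mul_le_mul ih h2 (by positivity) hP.le
      _ = ∏ k ∈ Finset.range (n + 3), (β + k) := by
          conv_rhs => rw [show n + 3 = (n + 2) + 1 from rfl, Finset.prod_range_succ]
          rw [show ((n:ℝ) + 2) = ((n + 2 : ℕ) : ℝ) by push_cast; ring]

theorem abs_normalizedMittagLefflerDeriv_le (α β : ℝ) (hα : 1 ≤ α) (hβ : 1 ≤ β)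
    (z : ℂ) (hz : ‖z‖ < 1) :
    ‖normalizedMittagLefflerDeriv α β z‖ ≤ (β ^ 2 + 3 * β + 2) / β ^ 2 := by
  have hβ0 : (0:ℝ) < β := lt_of_lt_of_le one_pos hβ
  set x : ℝ := (β + 2)⁻¹ with hxdef
  have hx0 : 0 < x := by positivity
  have hx1 : x < 1 := by
    rw [hxdef, inv_lt_one_iff₀]; right; linarith
  -- sum of the tail bounding series
  have hg : HasSum (fun n : ℕ => ((n : ℝ) + 3) * x ^ n / (β * (β + 1)))
      ((x / (1 - x) ^ 2 + 3 * (1 - x)⁻¹) / (β * (β + 1))) := by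
    have h1 : HasSum (fun n : ℕ => (n : ℝ) * x ^ n) (x / (1 - x) ^ 2) :=
      hasSum_coe_mul_geometric_of_norm_lt_one
        (by rwa [Real.norm_eq_abs, abs_of_nonneg hx0.le])
    have h2 : HasSum (fun n : ℕ => x ^ n) (1 - x)⁻¹ :=
      hasSum_geometric_of_lt_one hx0.le hx1
    have := (h1.add (h2.mul_left 3)).div_const (β * (β + 1))
    convert this using 2 with n
    · rfl
    ring
  -- sum of the full bounding sequence
  have hbb : HasSum (mlBound β)
      ((x / (1 - x) ^ 2 + 3 * (1 - x)⁻¹) / (β * (β + 1)) + 2 / β) := by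
    have h0 : HasSum (fun n : ℕ => mlBound β (n + 1))
        ((x / (1 - x) ^ 2 + 3 * (1 - x)⁻¹) / (β * (β + 1))) := hg
    have h := (hasSum_nat_add_iff 1).mp h0
    simpa [mlBound] using h
  -- term-wise bound
  have hle : ∀ n : ℕ, ‖((n : ℂ) + 2) *
      ((Real.Gamma β / Real.Gamma (α * (n + 1) + β) : ℝ) : ℂ) * z ^ (n + 1)‖
      ≤ mlBound β n := by
    intro n
    have hΓpos : 0 < Real.Gamma (α * (n + 1) + β) := by
      apply Real.Gamma_pos_of_pos; nlinarith [Nat.cast_nonneg (α := ℝ) n]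
    have hΓβ : 0 < Real.Gamma β := Real.Gamma_pos_of_pos hβ0
    have hr0 : 0 ≤ Real.Gamma β / Real.Gamma (α * (n + 1) + β) := by positivity
    have hnorm : ‖((n : ℂ) + 2) *
        ((Real.Gamma β / Real.Gamma (α * (n + 1) + β) : ℝ) : ℂ) * z ^ (n + 1)‖
        = ((n : ℝ) + 2) * (Real.Gamma β / Real.Gamma (α * (n + 1) + β)) * ‖z‖ ^ (n + 1) := by
      rw [norm_mul, norm_mul, norm_pow, Complex.norm_real, Real.norm_eq_abs,
        abs_of_nonneg hr0]
      congr 2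
      have h : ((n : ℂ) + 2) = ((n + 2 : ℕ) : ℂ) := by push_cast; ring
      rw [h, Complex.norm_natCast]
      push_cast; ring
    rw [hnorm]
    have hz1 : ‖z‖ ^ (n + 1) ≤ 1 :=
      pow_le_one₀ (norm_nonneg z) hz.le
    have hratio := gamma_ratio_le α β hα hβ n
    have hP : (0:ℝ) < ∏ k ∈ Finset.range (n + 1), (β + k) := by
      apply Finset.prod_pos; intro k _; positivity
    have step1 : ((n : ℝ) + 2) * (Real.Gamma β / Real.Gamma (α * (n + 1) + β)) * ‖z‖ ^ (n + 1)
        ≤ ((n : ℝ) + 2) * (1 / ∏ k ∈ Finset.range (n + 1), (β + k)) := by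
      calc ((n : ℝ) + 2) * (Real.Gamma β / Real.Gamma (α * (n + 1) + β)) * ‖z‖ ^ (n + 1)
          ≤ ((n : ℝ) + 2) * (Real.Gamma β / Real.Gamma (α * (n + 1) + β)) * 1 := by
            apply mul_le_mul_of_nonneg_left hz1 (by positivity)
        _ = ((n : ℝ) + 2) * (Real.Gamma β / Real.Gamma (α * (n + 1) + β)) := by ring
        _ ≤ ((n : ℝ) + 2) * (1 / ∏ k ∈ Finset.range (n + 1), (β + k)) := by
            apply mul_le_mul_of_nonneg_left hratio (by positivity)
    refine le_trans step1 ?_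
    match n with
    | 0 =>
      simp only [mlBound]
      rw [Finset.prod_range_one]
      push_cast
      rw [add_zero, mul_one_div]
      norm_num
    | (m+1) =>
      simp only [mlBound]
      have hprod := prod_lower_bound β hβ m
      have hden : (0:ℝ) < β * (β + 1) * (β + 2) ^ m := by positivity
      have key : (1:ℝ) / ∏ k ∈ Finset.range (m + 2), (β + k)
          ≤ 1 / (β * (β + 1) * (β + 2) ^ m) :=
        div_le_div_of_nonneg_left one_pos.le hden hprod
      calc (((m + 1 : ℕ) : ℝ) + 2) * (1 / ∏ k ∈ Finset.range (m + 1 + 1), (β + k))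
          = ((m : ℝ) + 3) * (1 / ∏ k ∈ Finset.range (m + 2), (β + k)) := by
            push_cast; ring
        _ ≤ ((m : ℝ) + 3) * (1 / (β * (β + 1) * (β + 2) ^ m)) := by
            apply mul_le_mul_of_nonneg_left key (by positivity)
        _ = ((m : ℝ) + 3) * ((β + 2)⁻¹) ^ m / (β * (β + 1)) := by
            rw [inv_pow]
            field_simp
  -- put things together
  have hT := tsum_of_norm_bounded hbb hle
  rw [normalizedMittagLefflerDeriv]
  have h1x : 1 - x = (β + 1) / (β + 2) := by
    rw [hxdef]; field_simp; ring
  have hSg : x / (1 - x) ^ 2 + 3 * (1 - x)⁻¹ = (β + 2) * (3 * β + 4) / (β + 1) ^ 2 := by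
    rw [h1x, hxdef]; field_simp; ring
  have key2 : (β + 2) * (3 * β + 4) / (β + 1) ^ 2 / (β * (β + 1)) ≤ (β + 2) / β ^ 2 := by
    rw [div_div, div_le_div_iff₀ (by positivity) (by positivity)]
    have hb3 : β ≤ β ^ 3 := by
      nlinarith [mul_nonneg (mul_nonneg hβ0.le (sub_nonneg.mpr hβ))
        (by linarith : (0:ℝ) ≤ β + 1)]
    nlinarith [hb3, hβ0, hβ]
  have htar : (β ^ 2 + 3 * β + 2) / β ^ 2 = 1 + 2 / β + (β + 2) / β ^ 2 := by
    field_simp; ring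
  rw [hSg] at hT
  refine le_trans (norm_add_le _ _) ?_
  rw [norm_one, htar]
  linarith [key2, hT]
end

section
/- Let α ≥ 1 and β ≥ (1+√5)/2 be real numbers and let m be a nonnegative integer. Then for every z in the open unit disk 𝔻 with z ≠ 0, Re( 𝔼_{α,β}(z) / (𝔼_{α,β})_m(z) ) ≥ (β² − β − 1)/β². -/
/-- The `m`-th partial sum `(𝔼_{α,β})_m(z) = z + ∑_{n=1}^m (Γ(β)/Γ(αn+β)) z^{n+1}`. -/
noncomputable def normalizedMittagLefflerPartial (α β : ℝ) (m : ℕ) (z : ℂ) : ℂ :=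
  z + ∑ n ∈ Finset.Icc 1 m, ((Real.Gamma β / Real.Gamma (α * n + β) : ℝ) : ℂ) * z ^ (n + 1)

/-- `Γ(β)/Γ(β+n+1) ≤ (1/β)·(1/(β+1))^n` for `β ≥ 3/2`. -/
lemma gamma_ratio_le_s2 (β : ℝ) (hβ : (3/2 : ℝ) ≤ β) (n : ℕ) :
    Real.Gamma β / Real.Gamma (β + (n + 1)) ≤ (1/β) * (1/(β+1))^n := by
  have hβ0 : 0 < β := by linarith
  have hG : 0 < Real.Gamma β := Real.Gamma_pos_of_pos hβ0
  induction n with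
  | zero =>
    have h1 : Real.Gamma (β + 1) = β * Real.Gamma β := Real.Gamma_add_one hβ0.ne'
    rw [show ((0:ℕ) + 1 : ℝ) = 1 by norm_num, h1]
    rw [pow_zero, mul_one]
    rw [div_le_div_iff₀ (by positivity) hβ0]
    ring_nf
    exact le_rfl
  | succ n ih =>
    have hx : (0:ℝ) < β + (n+1) := by positivity
    have h1 : Real.Gamma (β + (n + 1 + 1)) = (β + (n+1)) * Real.Gamma (β + (n+1)) := by
      rw [show β + ((n:ℝ) + 1 + 1) = (β + (n+1)) + 1 by ring]
      exact Real.Gamma_add_one hx.ne'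
    have hGx : 0 < Real.Gamma (β + (n+1)) := Real.Gamma_pos_of_pos hx
    push_cast
    push_cast at ih
    rw [h1]
    have step : Real.Gamma β / ((β + (n+1)) * Real.Gamma (β + (n+1)))
        ≤ (Real.Gamma β / Real.Gamma (β + (n+1))) * (1/(β+1)) := by
      rw [mul_one_div, div_div]
      apply div_le_div_of_nonneg_left hG.le (by positivity)
      have h0 : (0:ℝ) ≤ (n:ℝ) := Nat.cast_nonneg n
      nlinarith [hGx]
    calc Real.Gamma β / ((β + ((n:ℝ)+1)) * Real.Gamma (β + ((n:ℝ)+1)))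
        ≤ (Real.Gamma β / Real.Gamma (β + ((n:ℝ)+1))) * (1/(β+1)) := step
      _ ≤ ((1/β) * (1/(β+1))^n) * (1/(β+1)) := by
          apply mul_le_mul_of_nonneg_right ih (by positivity)
      _ = (1/β) * (1/(β+1))^(n+1) := by ring

theorem re_mittagLeffler_div_partial_ge (α β : ℝ) (hα : 1 ≤ α)
    (hβ : (1 + Real.sqrt 5) / 2 ≤ β) (m : ℕ) (z : ℂ) (hz : ‖z‖ < 1) (hz0 : z ≠ 0) :
    (β ^ 2 - β - 1) / β ^ 2 ≤
      (normalizedMittagLeffler α β z / normalizedMittagLefflerPartial α β m z).re := by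
  have hs5 : Real.sqrt 5 ^ 2 = 5 := Real.sq_sqrt (by norm_num)
  have hs5' : (2:ℝ) ≤ Real.sqrt 5 := by nlinarith [Real.sqrt_nonneg 5]
  have hβ32 : (3/2 : ℝ) ≤ β := by linarith
  have hβ0 : (0:ℝ) < β := by linarith
  have hβsq : β + 1 ≤ β ^ 2 := by nlinarith [Real.sqrt_nonneg 5]
  set r := ‖z‖ with hrdef
  have hr0 : 0 < r := norm_pos_iff.mpr hz0
  have hr1 : r < 1 := hz
  set τ : ℝ := (β + 1) / β ^ 2 with hτdef
  have hτ0 : 0 < τ := by positivity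
  have hτ1 : τ ≤ 1 := by
    rw [div_le_one (by positivity)]; exact hβsq
  -- coefficients
  set a : ℕ → ℝ := fun n => Real.Gamma β / Real.Gamma (α * (n + 1) + β) with hadef
  have hG : 0 < Real.Gamma β := Real.Gamma_pos_of_pos hβ0
  have hapos : ∀ n, 0 < a n := by
    intro n
    have : (0:ℝ) < α * (n + 1) + β := by positivity -- α ≥ 1 > 0? need α > 0
    exact div_pos hG (Real.Gamma_pos_of_pos this)
  set b : ℕ → ℝ := fun n => (1/β) * (1/(β+1))^n with hbdef
  have hb0 : ∀ n, 0 ≤ b n := fun n => by positivity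
  have hab : ∀ n, a n ≤ b n := by
    intro n
    have h1 : Real.Gamma (β + (n + 1)) ≤ Real.Gamma (α * (n + 1) + β) := by
      have hm1 : (β + ((n:ℝ) + 1)) ∈ Set.Ici (2:ℝ) := by
        simp only [Set.mem_Ici]
        have : (0:ℝ) ≤ (n:ℝ) := Nat.cast_nonneg n
        linarith
      have hm2 : (α * ((n:ℝ) + 1) + β) ∈ Set.Ici (2:ℝ) := by
        simp only [Set.mem_Ici]
        have h0 : (0:ℝ) ≤ (n:ℝ) := Nat.cast_nonneg n
        nlinarith
      have hle : β + ((n:ℝ) + 1) ≤ α * ((n:ℝ) + 1) + β := by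
        have h0 : (0:ℝ) ≤ (n:ℝ) := Nat.cast_nonneg n
        nlinarith
      exact Real.Gamma_strictMonoOn_Ici.monotoneOn hm1 hm2 hle
    have h2 : a n ≤ Real.Gamma β / Real.Gamma (β + (n + 1)) := by
      apply div_le_div_of_nonneg_left hG.le (Real.Gamma_pos_of_pos (by positivity)) h1
    exact h2.trans (gamma_ratio_le_s2 β hβ32 n)
  have hbsum : Summable b := by
    apply Summable.mul_left
    apply summable_geometric_of_lt_one (by positivity)
    rw [div_lt_one (by linarith)]; linarith
  have hbtsum : ∑' n, b n = τ := by
    rw [hbdef]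
    rw [tsum_mul_left, tsum_geometric_of_lt_one (by positivity)
      (by rw [div_lt_one (by linarith)]; linarith)]
    have h9 : (1:ℝ) - 1/(β+1) = β/(β+1) := by field_simp; ring
    rw [h9, inv_div, hτdef]
    ring
  have hasum : Summable a := hbsum.of_nonneg_of_le (fun n => (hapos n).le) hab
  -- the real coefficient series with powers of r
  set c : ℕ → ℝ := fun n => a n * r ^ (n + 2) with hcdef
  have hc0 : ∀ n, 0 < c n := fun n => by
    exact mul_pos (hapos n) (by positivity)
  have hcb : ∀ n, c n ≤ b n * r := by
    intro n
    have h1 : r ^ (n+2) ≤ r := by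
      calc r ^ (n+2) ≤ r ^ 1 := pow_le_pow_of_le_one hr0.le hr1.le (by omega)
        _ = r := pow_one r
    calc c n = a n * r ^ (n+2) := rfl
      _ ≤ a n * r := by apply mul_le_mul_of_nonneg_left h1 (hapos n).le
      _ ≤ b n * r := by apply mul_le_mul_of_nonneg_right (hab n) hr0.le
  have hcsum : Summable c := by
    apply Summable.of_nonneg_of_le (fun n => (hc0 n).le) hcb (hbsum.mul_right r)
  have hctsum_le : ∑' n, c n ≤ τ * r := by
    calc ∑' n, c n ≤ ∑' n, b n * r := Summable.tsum_le_tsum hcb hcsum (hbsum.mul_right r)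
      _ = (∑' n, b n) * r := tsum_mul_right
      _ = τ * r := by rw [hbtsum]
  -- complex series
  set w : ℕ → ℂ := fun n => ((a n : ℝ) : ℂ) * z ^ (n + 2) with hwdef
  have hwnorm : ∀ n, ‖w n‖ = c n := by
    intro n
    rw [hwdef]
    simp only [norm_mul, norm_pow, Complex.norm_real, Real.norm_eq_abs,
      abs_of_pos (hapos n)]
    rfl
  have hwsum : Summable w := by
    apply Summable.of_norm
    simpa only [hwnorm] using hcsum
  -- identify the pieces
  have hfeq : normalizedMittagLeffler α β z = z + ∑' n, w n := by rfl
  have hgeq : normalizedMittagLefflerPartial α β m z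
      = z + ∑ k ∈ Finset.range m, w k := by
    rw [normalizedMittagLefflerPartial]
    congr 1
    rw [show Finset.Icc 1 m = Finset.Ico 1 (m+1) by rfl, Finset.sum_Ico_eq_sum_range]
    simp only [Nat.add_sub_cancel]
    apply Finset.sum_congr rfl
    intro k _
    rw [hwdef, hadef]
    push_cast
    ring_nf
  set P : ℂ := ∑ k ∈ Finset.range m, w k with hPdef
  set fm : ℂ := z + P with hfmdef
  set R : ℂ := ∑' i, w (i + m) with hRdef
  have hsplit : P + R = ∑' n, w n := Summable.sum_add_tsum_nat_add m hwsum
  -- norm bounds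
  have hPr : ‖P‖ ≤ ∑ k ∈ Finset.range m, c k := by
    calc ‖P‖ ≤ ∑ k ∈ Finset.range m, ‖w k‖ := norm_sum_le _ _
      _ = ∑ k ∈ Finset.range m, c k := by simp only [hwnorm]
  set Pr : ℝ := ∑ k ∈ Finset.range m, c k with hPrdef
  have hPr0 : 0 ≤ Pr := Finset.sum_nonneg fun k _ => (hc0 k).le
  set Tr : ℝ := ∑' i, c (i + m) with hTrdef
  have hTrsum : Summable (fun i => c (i + m)) := by
    exact (summable_nat_add_iff m).mpr hcsum
  have hTr0 : 0 < Tr := Summable.tsum_pos hTrsum (fun i => (hc0 _).le) 0 (hc0 (0 + m))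
  have hsplitr : Pr + Tr = ∑' n, c n := Summable.sum_add_tsum_nat_add m hcsum
  have hRr : ‖R‖ ≤ Tr := by
    calc ‖R‖ ≤ ∑' i, ‖w (i + m)‖ := norm_tsum_le_tsum_norm (by
        simpa only [hwnorm] using hTrsum)
      _ = Tr := by rw [hTrdef]; exact tsum_congr fun i => hwnorm _
  -- Pr < r and fm ≠ 0
  have hPrlt : Pr < r := by
    have h1 : Pr + Tr ≤ τ * r := hsplitr ▸ hctsum_le
    have h2 : τ * r ≤ r := by nlinarith
    linarith
  have hfmnorm : r - Pr ≤ ‖fm‖ := by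
    have h := norm_sub_norm_le z (-P)
    rw [sub_neg_eq_add, norm_neg] at h
    rw [hfmdef]
    linarith
  have hfm0 : fm ≠ 0 := by
    intro h
    rw [h, norm_zero] at hfmnorm
    linarith
  -- key estimate : ‖R‖ ≤ τ * ‖fm‖
  have hkey : ‖R‖ ≤ τ * ‖fm‖ := by
    have h1 : Pr + Tr ≤ τ * r := hsplitr ▸ hctsum_le
    have h2 : Tr ≤ τ * (r - Pr) := by nlinarith
    calc ‖R‖ ≤ Tr := hRr
      _ ≤ τ * (r - Pr) := h2
      _ ≤ τ * ‖fm‖ := by apply mul_le_mul_of_nonneg_left hfmnorm hτ0.le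
  -- conclude
  have hfR : normalizedMittagLeffler α β z = fm + R := by
    rw [hfeq, hfmdef, ← hsplit]
    ring
  have hdiv : normalizedMittagLeffler α β z / normalizedMittagLefflerPartial α β m z
      = 1 + R / fm := by
    rw [hfR, hgeq, add_div, div_self hfm0]
  rw [hdiv]
  have hre : (1 + R / fm).re = 1 + (R / fm).re := by simp
  rw [hre]
  have h1 : -(‖R / fm‖) ≤ (R / fm).re := by
    have := (abs_le.mp (Complex.abs_re_le_norm (R / fm))).1
    exact this
  have h2 : ‖R / fm‖ ≤ τ := by
    rw [norm_div]
    rw [div_le_iff₀ (norm_pos_iff.mpr hfm0)]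
    exact hkey
  have h3 : (β ^ 2 - β - 1) / β ^ 2 = 1 - τ := by
    rw [hτdef]
    field_simp
    ring
  rw [h3]
  linarith
end

section
/- Let α ≥ 1 and β ≥ (3+√17)/2 be real numbers and let m be a nonnegative integer. Then for every z in the open unit disk 𝔻, Re( 𝔼'_{α,β}(z) / (𝔼_{α,β})'_m(z) ) ≥ (β² − 3β − 2)/β², where 𝔼'_{α,β}(z) = 1 + Σ_{n=1}^∞ (n+1) A_n z^{n} and (𝔼_{α,β})'_m(z) = 1 + Σ_{n=1}^m (n+1) A_n z^{n}. -/
-- Gamma lower bound: Γ(n+β) ≥ β^n Γ(β)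
lemma ml_gamma_pow_le (β : ℝ) (hβ : 2 ≤ β) (n : ℕ) :
    β ^ n * Real.Gamma β ≤ Real.Gamma (n + β) := by
  induction n with
  | zero => simp
  | succ n ih =>
    have hpos : (0:ℝ) < n + β := by positivity
    have : Real.Gamma ((n+1 : ℕ) + β) = (n + β) * Real.Gamma (n + β) := by
      push_cast
      rw [show (n:ℝ) + 1 + β = ((n:ℝ) + β) + 1 by ring, Real.Gamma_add_one hpos.ne']
    rw [this]
    calc β ^ (n+1) * Real.Gamma β = β * (β ^ n * Real.Gamma β) := by ring
      _ ≤ β * Real.Gamma (n + β) := by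
          have := Real.Gamma_pos_of_pos hpos
          nlinarith [Real.Gamma_pos_of_pos (show (0:ℝ) < β by linarith)]
      _ ≤ (n + β) * Real.Gamma (n + β) := by
          have := Real.Gamma_pos_of_pos hpos
          nlinarith [Nat.cast_nonneg (α := ℝ) n]

-- A n ≤ β⁻¹ ^ n
lemma ml_A_le (α β : ℝ) (hα : 1 ≤ α) (hβ : 2 ≤ β) (n : ℕ) :
    Real.Gamma β / Real.Gamma (α * n + β) ≤ β⁻¹ ^ n := by
  have hβ0 : (0:ℝ) < β := by linarith
  have h1 : (n:ℝ) + β ≤ α * n + β := by nlinarith [Nat.cast_nonneg (α := ℝ) n]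
  have h2 : Real.Gamma (n + β) ≤ Real.Gamma (α * n + β) := by
    rcases eq_or_lt_of_le h1 with h | h
    · rw [h]
    · exact le_of_lt (Real.Gamma_strictMonoOn_Ici
        (by simp only [Set.mem_Ici]; nlinarith [Nat.cast_nonneg (α := ℝ) n])
        (by simp only [Set.mem_Ici]; nlinarith [Nat.cast_nonneg (α := ℝ) n]) h)
  have h3 := ml_gamma_pow_le β hβ n
  have hg1 : (0:ℝ) < Real.Gamma (n + β) := Real.Gamma_pos_of_pos (by positivity)
  have hg2 : (0:ℝ) < Real.Gamma (α * n + β) := Real.Gamma_pos_of_pos (by nlinarith [Nat.cast_nonneg (α := ℝ) n])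
  rw [div_le_iff₀ hg2, inv_pow]
  rw [inv_mul_eq_div, le_div_iff₀ (by positivity)]
  nlinarith

lemma ml_g_summable {x : ℝ} (hx : ‖x‖ < 1) :
    Summable (fun k : ℕ => ((k:ℝ) + 2) * x ^ (k + 1)) := by
  have h1 : Summable (fun k : ℕ => (k:ℝ) * x ^ k) := by
    simpa using summable_pow_mul_geometric_of_norm_lt_one 1 hx
  have h2 : Summable (fun k : ℕ => x ^ k) := summable_geometric_of_norm_lt_one hx
  have := ((h1.add (h2.mul_left 2)).mul_left x)
  refine this.congr fun k => ?_
  ring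

lemma ml_g_tsum {x : ℝ} (hx : ‖x‖ < 1) :
    ∑' k : ℕ, ((k:ℝ) + 2) * x ^ (k + 1) = (2 * x - x ^ 2) / (1 - x) ^ 2 := by
  have h1 : Summable (fun k : ℕ => (k:ℝ) * x ^ k) := by
    simpa using summable_pow_mul_geometric_of_norm_lt_one 1 hx
  have h2 : Summable (fun k : ℕ => x ^ k) := summable_geometric_of_norm_lt_one hx
  have hx1 : x ≠ 1 := by intro h; rw [h] at hx; simp at hx
  calc ∑' k : ℕ, ((k:ℝ) + 2) * x ^ (k + 1)
      = ∑' k : ℕ, (x * ((k:ℝ) * x ^ k) + (2*x) * x ^ k) := by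
        refine tsum_congr fun k => ?_; ring
    _ = x * (∑' k : ℕ, (k:ℝ) * x ^ k) + (2*x) * ∑' k : ℕ, x ^ k := by
        rw [Summable.tsum_add (h1.mul_left x) (h2.mul_left (2*x)), tsum_mul_left, tsum_mul_left]
    _ = x * (x / (1 - x) ^ 2) + (2*x) * (1-x)⁻¹ := by
        rw [tsum_coe_mul_geometric_of_norm_lt_one hx, tsum_geometric_of_norm_lt_one hx]
    _ = (2 * x - x ^ 2) / (1 - x) ^ 2 := by
        have h1x : (1:ℝ) - x ≠ 0 := sub_ne_zero.mpr (Ne.symm hx1)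
        field_simp
        ring



/-- The derivative of the `m`-th partial sum,
`(𝔼_{α,β})'_m(z) = 1 + ∑_{n=1}^m (n+1) (Γ(β)/Γ(αn+β)) z^{n}`. -/
noncomputable def normalizedMittagLefflerDerivPartial (α β : ℝ) (m : ℕ) (z : ℂ) : ℂ :=
  1 + ∑ n ∈ Finset.Icc 1 m,
      ((n : ℂ) + 1) * ((Real.Gamma β / Real.Gamma (α * n + β) : ℝ) : ℂ) * z ^ n

set_option maxHeartbeats 1000000 in
theorem re_derivMittagLeffler_div_derivPartial_ge (α β : ℝ) (hα : 1 ≤ α)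
    (hβ : (3 + Real.sqrt 17) / 2 ≤ β) (m : ℕ) (z : ℂ) (hz : ‖z‖ < 1) :
    (β ^ 2 - 3 * β - 2) / β ^ 2 ≤
      (normalizedMittagLefflerDeriv α β z / normalizedMittagLefflerDerivPartial α β m z).re := by
  have hs17 : Real.sqrt 17 ^ 2 = 17 := Real.sq_sqrt (by norm_num)
  have hs17' : (4:ℝ) ≤ Real.sqrt 17 := by nlinarith [Real.sqrt_nonneg 17]
  have hβ35 : (7/2 : ℝ) ≤ β := by linarith
  have hβ0 : (0:ℝ) < β := by linarith
  have hβ2 : 3 * β + 2 ≤ β ^ 2 := by nlinarith [Real.sqrt_nonneg 17]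
  have hinv : (0:ℝ) < 1 - β⁻¹ := by
    rw [sub_pos, inv_lt_one_iff₀]; right; linarith
  set A : ℕ → ℝ := fun n => Real.Gamma β / Real.Gamma (α * n + β) with hAdef
  have hApos : ∀ n : ℕ, 0 < A n := fun n =>
    div_pos (Real.Gamma_pos_of_pos hβ0)
      (Real.Gamma_pos_of_pos (by nlinarith [Nat.cast_nonneg (α := ℝ) n]))
  set r : ℕ → ℝ := fun k => ((k:ℝ) + 2) * A (k + 1) with hrdef
  have hrpos : ∀ k, 0 < r k := fun k => by
    have := hApos (k + 1); positivity
  have hxnorm : ‖β⁻¹‖ < 1 := by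
    rw [Real.norm_eq_abs, abs_of_pos (by positivity)]; linarith
  have hrle : ∀ k, r k ≤ ((k:ℝ) + 2) * β⁻¹ ^ (k + 1) := by
    intro k
    have h := ml_A_le α β hα (by linarith) (k + 1)
    have hle : A (k + 1) ≤ β⁻¹ ^ (k + 1) := by
      rw [hAdef]; push_cast at h ⊢; exact h
    exact mul_le_mul_of_nonneg_left hle (by positivity)
  have hgsum := ml_g_summable hxnorm
  have hrsum : Summable r := hgsum.of_nonneg_of_le (fun k => (hrpos k).le) hrle
  set S : ℝ := ∑' k, r k with hSdef
  set T : ℝ := ∑ k ∈ Finset.range m, r k with hTdef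
  have hT0 : 0 ≤ T := Finset.sum_nonneg fun k _ => (hrpos k).le
  have htail_sum : Summable (fun i => r (i + m)) := (summable_nat_add_iff m).2 hrsum
  have hTS : T + ∑' i, r (i + m) = S := hrsum.sum_add_tsum_nat_add m
  have htail_pos : 0 < ∑' i, r (i + m) :=
    Summable.tsum_pos htail_sum (fun i => (hrpos _).le) 0 (by simpa using hrpos m)
  have hSle : S ≤ (3 * β + 2) / β ^ 2 := by
    have h1 : S ≤ ∑' k : ℕ, ((k:ℝ) + 2) * β⁻¹ ^ (k + 1) :=
      Summable.tsum_le_tsum hrle hrsum hgsum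
    rw [ml_g_tsum hxnorm] at h1
    refine h1.trans ?_
    have hb1 : (0:ℝ) < β - 1 := by linarith
    have heq : (2 * β⁻¹ - β⁻¹ ^ 2) / (1 - β⁻¹) ^ 2 = (2 * β - 1) / (β - 1) ^ 2 := by
      rw [div_eq_div_iff (by positivity) (by positivity)]
      field_simp
    rw [heq, div_le_div_iff₀ (by positivity) (by positivity)]
    nlinarith
  have hS1 : S ≤ 1 := by
    refine hSle.trans ?_
    rw [div_le_one (by positivity)]; linarith
  have hT1 : (0:ℝ) < 1 - T := by linarith
  -- complex coefficients
  set c : ℕ → ℂ := fun n => ((n:ℂ) + 2) * ((A (n + 1) : ℝ) : ℂ) * z ^ (n + 1) with hcdef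
  have hcnorm : ∀ n, ‖c n‖ ≤ r n := by
    intro n
    have hzn : ‖z‖ ^ (n + 1) ≤ 1 := pow_le_one₀ (norm_nonneg z) hz.le
    have hA := hApos (n + 1)
    calc ‖c n‖ = ((n:ℝ) + 2) * A (n + 1) * ‖z‖ ^ (n + 1) := by
          rw [hcdef]
          simp only [norm_mul, norm_pow, Complex.norm_real, Real.norm_eq_abs,
            abs_of_pos hA]
          congr 2
          rw [show ((n:ℂ) + 2) = ((n + 2 : ℕ) : ℂ) by push_cast; ring,
            Complex.norm_natCast]
          push_cast; ring
      _ ≤ ((n:ℝ) + 2) * A (n + 1) := mul_le_of_le_one_right (by positivity) hzn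
      _ = r n := rfl
  have hcnormsum : Summable (fun n => ‖c n‖) :=
    hrsum.of_nonneg_of_le (fun n => norm_nonneg _) hcnorm
  have hcsum : Summable c := hcnormsum.of_norm
  set F : ℂ := normalizedMittagLefflerDeriv α β z with hFdef
  set G : ℂ := normalizedMittagLefflerDerivPartial α β m z with hGdef
  have hFeq : F = 1 + ∑' n, c n := by
    rw [hFdef]
    unfold normalizedMittagLefflerDeriv
    congr 1
    refine tsum_congr fun n => ?_
    rw [hcdef, hAdef]
    push_cast
    ring_nf
  set P : ℂ := ∑ n ∈ Finset.Icc 1 m,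
      ((n : ℂ) + 1) * ((Real.Gamma β / Real.Gamma (α * n + β) : ℝ) : ℂ) * z ^ n with hPdef
  have hGeq : G = 1 + P := rfl
  have hPsum : P = ∑ k ∈ Finset.range m, c k := by
    rw [hPdef, show Finset.Icc 1 m = Finset.Ico 1 (m + 1) from (Finset.Ico_add_one_right_eq_Icc 1 m),
      Finset.sum_Ico_eq_sum_range]
    simp only [Nat.add_sub_cancel]
    refine Finset.sum_congr rfl fun k _ => ?_
    rw [hcdef, hAdef]
    push_cast
    ring_nf
  have hPnorm : ‖P‖ ≤ T := by
    rw [hPsum, hTdef]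
    refine (norm_sum_le _ _).trans ?_
    exact Finset.sum_le_sum fun k _ => hcnorm k
  have hGlow : 1 - T ≤ ‖G‖ := by
    have h2 : ‖(1:ℂ)‖ ≤ ‖1 + P‖ + ‖P‖ := by
      calc ‖(1:ℂ)‖ = ‖(1 + P) + (-P)‖ := by ring_nf
        _ ≤ ‖1 + P‖ + ‖-P‖ := norm_add_le _ _
        _ = ‖1 + P‖ + ‖P‖ := by rw [norm_neg]
    rw [norm_one] at h2
    rw [hGeq]
    linarith
  have hGpos : 0 < ‖G‖ := lt_of_lt_of_le hT1 hGlow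
  have hGne : G ≠ 0 := by
    intro h; rw [h, norm_zero] at hGpos; exact lt_irrefl 0 hGpos
  set D : ℂ := ∑' i, c (i + m) with hDdef
  have hFG : F = G + D := by
    rw [hFeq, hGeq, hPsum, hDdef, ← hcsum.sum_add_tsum_nat_add m]
    ring
  have hDnorm : ‖D‖ ≤ S - T := by
    have h1 : ‖D‖ ≤ ∑' i, ‖c (i + m)‖ :=
      norm_tsum_le_tsum_norm ((summable_nat_add_iff m).2 hcnormsum)
    have h2 : ∑' i, ‖c (i + m)‖ ≤ ∑' i, r (i + m) :=
      Summable.tsum_le_tsum (fun i => hcnorm _) ((summable_nat_add_iff m).2 hcnormsum) htail_sum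
    linarith
  have hST : 0 ≤ S - T := by linarith
  have hdiv : ‖D‖ / ‖G‖ ≤ (S - T) / (1 - T) :=
    div_le_div₀ hST hDnorm hT1 hGlow
  have hdiv2 : (S - T) / (1 - T) ≤ S := by
    rw [div_le_iff₀ hT1]
    nlinarith
  have hre : (F / G).re = 1 + (D / G).re := by
    rw [hFG, add_div, div_self hGne, Complex.add_re, Complex.one_re]
  have hre2 : -‖D / G‖ ≤ (D / G).re :=
    le_trans (neg_le_neg (Complex.abs_re_le_norm (D / G))) (neg_abs_le _)
  have hnormdiv : ‖D / G‖ = ‖D‖ / ‖G‖ := norm_div D G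
  have hfinal : (β ^ 2 - 3 * β - 2) / β ^ 2 = 1 - (3 * β + 2) / β ^ 2 := by
    field_simp
    ring
  rw [hre, hfinal]
  rw [hnormdiv] at hre2
  linarith
end

section
/- Let α ≥ 1 and β ≥ (3+√17)/2 be real numbers and let m be a nonnegative integer. Then for every z in the open unit disk 𝔻, Re( (𝔼_{α,β})'_m(z) / 𝔼'_{α,β}(z) ) ≥ β²/(β² + 3β + 2), where 𝔼'_{α,β}(z) = 1 + Σ_{n=1}^∞ (n+1) A_n z^{n} and (𝔼_{α,β})'_m(z) = 1 + Σ_{n=1}^m (n+1) A_n z^{n}. -/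
lemma ml_gamma_prod_le (β : ℝ) (hβ : 2 ≤ β) (n : ℕ) :
    Real.Gamma β * (β * (β + 1) ^ n) ≤ Real.Gamma (β + (n + 1)) := by
  induction n with
  | zero =>
    rw [show β + ((0:ℕ) + 1 : ℝ) = β + 1 by norm_num,
      Real.Gamma_add_one (by positivity : β ≠ 0)]
    ring_nf
    simp [mul_comm]
  | succ n ih =>
    have h2 : (β + ((n:ℝ) + 1)) ≠ 0 := by positivity
    have hΓpos : 0 < Real.Gamma (β + ((n:ℝ) + 1)) := Real.Gamma_pos_of_pos (by positivity)
    push_cast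
    rw [show β + ((n:ℝ) + 1 + 1) = (β + ((n:ℝ) + 1)) + 1 by ring, Real.Gamma_add_one h2]
    push_cast at ih
    calc Real.Gamma β * (β * (β + 1) ^ (n + 1))
        = (β + 1) * (Real.Gamma β * (β * (β + 1) ^ n)) := by ring
      _ ≤ (β + 1) * Real.Gamma (β + ((n:ℝ) + 1)) :=
          mul_le_mul_of_nonneg_left ih (by linarith)
      _ ≤ (β + ((n:ℝ) + 1)) * Real.Gamma (β + ((n:ℝ) + 1)) := by
          have : (0:ℝ) ≤ (n:ℝ) := Nat.cast_nonneg n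
          nlinarith

-- bound on coefficients
lemma ml_coef_le (α β : ℝ) (hα : 1 ≤ α) (hβ : 2 ≤ β) (n : ℕ) :
    ((n:ℝ) + 2) * (Real.Gamma β / Real.Gamma (α * (n + 1) + β))
      ≤ ((n:ℝ) + 2) * (((β+1)⁻¹) ^ n / β) := by
  have hβ0 : (0:ℝ) < β := by linarith
  have hΓβ : 0 < Real.Gamma β := Real.Gamma_pos_of_pos hβ0
  have hmem1 : β + ((n:ℝ) + 1) ∈ Set.Ici (2:ℝ) := by
    simp only [Set.mem_Ici]; have : (0:ℝ) ≤ (n:ℝ) := Nat.cast_nonneg n; linarith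
  have hle : β + ((n:ℝ) + 1) ≤ α * ((n:ℝ) + 1) + β := by
    have : (0:ℝ) ≤ (n:ℝ) := Nat.cast_nonneg n
    nlinarith
  have hmem2 : α * ((n:ℝ) + 1) + β ∈ Set.Ici (2:ℝ) := by
    simp only [Set.mem_Ici] at hmem1 ⊢; linarith
  have hmono : Real.Gamma (β + ((n:ℝ) + 1)) ≤ Real.Gamma (α * ((n:ℝ) + 1) + β) :=
    Real.Gamma_strictMonoOn_Ici.monotoneOn hmem1 hmem2 hle
  have hprod := ml_gamma_prod_le β hβ n
  have hΓa : 0 < Real.Gamma (α * ((n:ℝ) + 1) + β) := Real.Gamma_pos_of_pos (by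
    simp only [Set.mem_Ici] at hmem2; linarith)
  have key : Real.Gamma β * (β * (β + 1) ^ n) ≤ Real.Gamma (α * ((n:ℝ) + 1) + β) :=
    le_trans hprod hmono
  have hpow : (0:ℝ) < (β + 1) ^ n := by positivity
  have h1 : Real.Gamma β / Real.Gamma (α * ((n:ℝ) + 1) + β) ≤ ((β+1)⁻¹) ^ n / β := by
    rw [div_le_div_iff₀ hΓa (by positivity), inv_pow]
    rw [inv_mul_eq_div, le_div_iff₀ hpow]
    nlinarith [key]
  exact mul_le_mul_of_nonneg_left h1 (by positivity)

lemma ml_summable_aux (β : ℝ) (hβ : 2 ≤ β) :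
    Summable (fun n : ℕ => ((n:ℝ) * ((β+1)⁻¹) ^ n + 2 * ((β+1)⁻¹) ^ n) / β) := by
  have hy0 : (0:ℝ) < (β+1)⁻¹ := by positivity
  have hy1 : (β+1)⁻¹ < 1 := by
    rw [inv_lt_one_iff₀]; right; linarith
  have h1 : Summable (fun n : ℕ => (n:ℝ) * ((β+1)⁻¹) ^ n) := by
    have := summable_pow_mul_geometric_of_norm_lt_one (R := ℝ) 1
      (r := (β+1)⁻¹) (by rw [Real.norm_eq_abs, abs_of_pos hy0]; exact hy1)
    simpa using this
  have h2 : Summable (fun n : ℕ => 2 * ((β+1)⁻¹) ^ n) :=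
    (summable_geometric_of_lt_one hy0.le hy1).mul_left 2
  exact (h1.add h2).div_const β

lemma ml_summable (α β : ℝ) (hα : 1 ≤ α) (hβ : 2 ≤ β) :
    Summable (fun n : ℕ => ((n:ℝ) + 2) * (Real.Gamma β / Real.Gamma (α * (n + 1) + β))) := by
  apply Summable.of_nonneg_of_le _ _ (ml_summable_aux β hβ)
  · intro n
    have := Real.Gamma_pos_of_pos (show (0:ℝ) < β by linarith)
    have hpos : (0:ℝ) < Real.Gamma (α * ((n:ℝ) + 1) + β) := Real.Gamma_pos_of_pos (by
      have : (0:ℝ) ≤ (n:ℝ) := Nat.cast_nonneg n; nlinarith)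
    positivity
  · intro n
    have := ml_coef_le α β hα hβ n
    calc ((n:ℝ) + 2) * (Real.Gamma β / Real.Gamma (α * (n + 1) + β))
        ≤ ((n:ℝ) + 2) * (((β+1)⁻¹) ^ n / β) := this
      _ = ((n:ℝ) * ((β+1)⁻¹) ^ n + 2 * ((β+1)⁻¹) ^ n) / β := by ring

lemma ml_tsum_le (α β : ℝ) (hα : 1 ≤ α) (hβ : 7/2 ≤ β) :
    ∑' n : ℕ, ((n:ℝ) + 2) * (Real.Gamma β / Real.Gamma (α * (n + 1) + β))
      ≤ (3 * β + 2) / β ^ 2 := by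
  have hβ2 : (2:ℝ) ≤ β := by linarith
  have hy0 : (0:ℝ) < (β+1)⁻¹ := by positivity
  have hy1 : (β+1)⁻¹ < 1 := by rw [inv_lt_one_iff₀]; right; linarith
  have hyn : ‖(β+1)⁻¹‖ < 1 := by rw [Real.norm_eq_abs, abs_of_pos hy0]; exact hy1
  have h1 : Summable (fun n : ℕ => (n:ℝ) * ((β+1)⁻¹) ^ n) := by
    have := summable_pow_mul_geometric_of_norm_lt_one (R := ℝ) 1 (r := (β+1)⁻¹) hyn
    simpa using this
  have h2 : Summable (fun n : ℕ => 2 * ((β+1)⁻¹) ^ n) :=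
    (summable_geometric_of_lt_one hy0.le hy1).mul_left 2
  have step1 : ∑' n : ℕ, ((n:ℝ) + 2) * (Real.Gamma β / Real.Gamma (α * (n + 1) + β))
      ≤ ∑' n : ℕ, ((n:ℝ) * ((β+1)⁻¹) ^ n + 2 * ((β+1)⁻¹) ^ n) / β := by
    apply Summable.tsum_le_tsum _ (ml_summable α β hα hβ2) (ml_summable_aux β hβ2)
    intro n
    calc ((n:ℝ) + 2) * (Real.Gamma β / Real.Gamma (α * (n + 1) + β))
        ≤ ((n:ℝ) + 2) * (((β+1)⁻¹) ^ n / β) := ml_coef_le α β hα hβ2 n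
      _ = ((n:ℝ) * ((β+1)⁻¹) ^ n + 2 * ((β+1)⁻¹) ^ n) / β := by ring
  have step2 : ∑' n : ℕ, ((n:ℝ) * ((β+1)⁻¹) ^ n + 2 * ((β+1)⁻¹) ^ n) / β
      = ((β+1)⁻¹ / (1 - (β+1)⁻¹) ^ 2 + 2 * (1 - (β+1)⁻¹)⁻¹) / β := by
    rw [tsum_div_const, Summable.tsum_add h1 h2, tsum_mul_left,
      tsum_coe_mul_geometric_of_norm_lt_one hyn, tsum_geometric_of_lt_one hy0.le hy1]
  have step3 : ((β+1)⁻¹ / (1 - (β+1)⁻¹) ^ 2 + 2 * (1 - (β+1)⁻¹)⁻¹) / β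
      ≤ (3 * β + 2) / β ^ 2 := by
    have hβ0 : (0:ℝ) < β := by linarith
    have hb1 : (0:ℝ) < β + 1 := by linarith
    have h1y : 1 - (β+1)⁻¹ = β / (β+1) := by field_simp; ring
    rw [h1y]
    rw [div_le_div_iff₀ hβ0 (by positivity)]
    field_simp
    have key : (β+1)*(1+2*β) ≤ (3*β+2)*β := by nlinarith
    nlinarith [mul_le_mul_of_nonneg_left key (show (0:ℝ) ≤ β^3*(β+1) by positivity)]
  linarith [step1, step2.le, step2.ge, step3]

set_option maxHeartbeats 1000000 in
theorem re_derivPartial_div_derivMittagLeffler_ge (α β : ℝ) (hα : 1 ≤ α)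
    (hβ : (3 + Real.sqrt 17) / 2 ≤ β) (m : ℕ) (z : ℂ) (hz : ‖z‖ < 1) :
    β ^ 2 / (β ^ 2 + 3 * β + 2) ≤
      (normalizedMittagLefflerDerivPartial α β m z / normalizedMittagLefflerDeriv α β z).re := by
  -- numeric facts about β
  have h17 : (4:ℝ) ≤ Real.sqrt 17 := by
    rw [show (4:ℝ) = Real.sqrt 16 by
      rw [show (16:ℝ) = 4^2 by norm_num, Real.sqrt_sq (by norm_num : (0:ℝ) ≤ 4)]]
    exact Real.sqrt_le_sqrt (by norm_num)
  have hβ35 : (7:ℝ)/2 ≤ β := by linarith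
  have hβ0 : (0:ℝ) < β := by linarith
  have hsq17 : Real.sqrt 17 ^ 2 = 17 := Real.sq_sqrt (by norm_num)
  have hb2 : 3 * β + 2 ≤ β ^ 2 := by
    have h1 : (0:ℝ) ≤ 2*β - 3 - Real.sqrt 17 := by linarith
    have h2 : (0:ℝ) ≤ 2*β - 3 + Real.sqrt 17 := by linarith [Real.sqrt_nonneg 17]
    nlinarith [mul_nonneg h1 h2]
  have hD : (0:ℝ) < β^2 + 3*β + 2 := by positivity
  set c : ℝ := β^2 / (β^2 + 3*β + 2) with hcdef
  have hc0 : 0 < c := by positivity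
  have hc1 : c < 1 := by rw [hcdef, div_lt_one hD]; linarith
  have hchalf : 1/2 ≤ c := by rw [hcdef, le_div_iff₀ hD]; linarith
  -- coefficients
  set a : ℕ → ℝ := fun n => ((n:ℝ) + 2) * (Real.Gamma β / Real.Gamma (α * (n + 1) + β))
    with hadef
  have ha_pos : ∀ n, 0 < a n := by
    intro n
    have h1 := Real.Gamma_pos_of_pos hβ0
    have h2 : (0:ℝ) < Real.Gamma (α * ((n:ℝ) + 1) + β) := Real.Gamma_pos_of_pos (by
      have : (0:ℝ) ≤ (n:ℝ) := Nat.cast_nonneg n; nlinarith)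
    simp only [hadef]
    positivity
  have ha_summ : Summable a := ml_summable α β hα (by linarith)
  have hS : ∑' n, a n ≤ (3*β + 2)/β^2 := ml_tsum_le α β hα hβ35
  -- complex terms
  set t : ℕ → ℂ := fun n => ((a n : ℝ) : ℂ) * z ^ (n+1) with htdef
  have ht_norm : ∀ n, ‖t n‖ = a n * ‖z‖ ^ (n+1) := by
    intro n
    simp only [htdef, norm_mul, norm_pow, Complex.norm_real, Real.norm_eq_abs,
      abs_of_pos (ha_pos n)]
  have hr0 : (0:ℝ) ≤ ‖z‖ := norm_nonneg z
  have hr_pow : ∀ k : ℕ, ‖z‖ ^ (k+1) ≤ ‖z‖ := by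
    intro k
    calc ‖z‖ ^ (k+1) = ‖z‖ * ‖z‖^k := by ring
      _ ≤ ‖z‖ * 1 := by
          apply mul_le_mul_of_nonneg_left _ hr0
          exact pow_le_one₀ hr0 hz.le
      _ = ‖z‖ := by ring
  have ht_le : ∀ n, ‖t n‖ ≤ a n := by
    intro n
    rw [ht_norm n]
    calc a n * ‖z‖^(n+1) ≤ a n * 1 := by
          apply mul_le_mul_of_nonneg_left _ (ha_pos n).le
          exact pow_le_one₀ hr0 hz.le
      _ = a n := by ring
  have ht_summ : Summable t := Summable.of_norm_bounded ha_summ ht_le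
  -- partial and tail
  set s : ℝ := ∑ i ∈ Finset.range m, a i with hsdef
  set τ : ℝ := ∑' n, a (n + m) with hτdef
  have hτ_summ : Summable (fun n => a (n + m)) := (summable_nat_add_iff m).2 ha_summ
  have hsplit : s + τ = ∑' n, a n := Summable.sum_add_tsum_nat_add m ha_summ
  have hs0 : 0 ≤ s := Finset.sum_nonneg fun i _ => (ha_pos i).le
  have hτ0 : 0 ≤ τ := tsum_nonneg fun n => (ha_pos _).le
  set Q : ℂ := normalizedMittagLefflerDerivPartial α β m z with hQdef
  set T : ℂ := ∑' n, t (n + m) with hTdef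
  have hT_summ : Summable (fun n => t (n + m)) := (summable_nat_add_iff m).2 ht_summ
  have hQ : Q = 1 + ∑ i ∈ Finset.range m, t i := by
    rw [hQdef]
    unfold normalizedMittagLefflerDerivPartial
    congr 1
    rw [show Finset.Icc 1 m = Finset.Ico 1 (m+1) by rw [Finset.Ico_add_one_right_eq_Icc],
      Finset.sum_Ico_eq_sum_range]
    simp only [Nat.add_sub_cancel]
    apply Finset.sum_congr (by norm_num)
    intro i _
    simp only [htdef, hadef]
    push_cast
    ring
  have hE : normalizedMittagLefflerDeriv α β z = Q + T := by
    unfold normalizedMittagLefflerDeriv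
    have h1 : ∑' n : ℕ, ((n : ℂ) + 2) * ((Real.Gamma β / Real.Gamma (α * (n + 1) + β) : ℝ) : ℂ)
        * z ^ (n + 1) = ∑' n, t n := by
      apply tsum_congr
      intro n
      simp only [htdef, hadef]
      push_cast
      ring
    rw [h1, ← Summable.sum_add_tsum_nat_add m ht_summ, hQ, hTdef]
    ring
  -- norm bounds
  have hTn : ‖T‖ ≤ ‖z‖ * τ := by
    have h1 : ‖T‖ ≤ ∑' n, ‖t (n + m)‖ := norm_tsum_le_tsum_norm hT_summ.norm
    have h2 : ∑' n, ‖t (n + m)‖ ≤ ∑' n, a (n + m) * ‖z‖ := by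
      apply Summable.tsum_le_tsum _ hT_summ.norm (hτ_summ.mul_right _)
      intro n
      rw [ht_norm]
      exact mul_le_mul_of_nonneg_left (hr_pow _) (ha_pos _).le
    have h3 : ∑' n, a (n + m) * ‖z‖ = τ * ‖z‖ := by rw [hτdef, tsum_mul_right]
    calc ‖T‖ ≤ τ * ‖z‖ := by linarith
      _ = ‖z‖ * τ := by ring
  have hsum_norm : ‖∑ i ∈ Finset.range m, t i‖ ≤ ‖z‖ * s := by
    calc ‖∑ i ∈ Finset.range m, t i‖ ≤ ∑ i ∈ Finset.range m, ‖t i‖ :=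
          norm_sum_le _ _
      _ ≤ ∑ i ∈ Finset.range m, a i * ‖z‖ := by
          apply Finset.sum_le_sum
          intro i _
          rw [ht_norm]
          exact mul_le_mul_of_nonneg_left (hr_pow _) (ha_pos _).le
      _ = ‖z‖ * s := by rw [← Finset.sum_mul, mul_comm]
  have hQn : 1 - ‖z‖ * s ≤ ‖Q‖ := by
    have h := norm_add_le (1 + ∑ i ∈ Finset.range m, t i) (-(∑ i ∈ Finset.range m, t i))
    simp only [add_neg_cancel_right, norm_neg, norm_one] at h
    rw [hQ]
    have : ‖(1:ℂ)‖ = 1 := norm_one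
    calc 1 - ‖z‖ * s ≤ 1 - ‖∑ i ∈ Finset.range m, t i‖ := by linarith
      _ ≤ ‖1 + ∑ i ∈ Finset.range m, t i‖ := by
          have h2 := norm_add_le (1 + ∑ i ∈ Finset.range m, t i) (-(∑ i ∈ Finset.range m, t i))
          simp only [add_neg_cancel_right] at h2
          rw [norm_neg] at h2
          simp only [norm_one] at h2
          linarith
  -- key coefficient inequality
  have hSt : s + τ ≤ (3*β+2)/β^2 := by rw [hsplit]; exact hS
  have hSB1 : (3*β+2)/β^2 ≤ 1 := by rw [div_le_one (by positivity)]; linarith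
  have hcS : c * ((3*β+2)/β^2) = 1 - c := by
    rw [hcdef]
    field_simp
    ring
  have h5 : c*τ + (1-c)*s ≤ 1 - c := by
    nlinarith [mul_le_mul_of_nonneg_left hSt hc0.le,
      mul_nonneg (by linarith : (0:ℝ) ≤ 2*c - 1) hs0]
  have h6 : c * (‖z‖ * τ) ≤ (1-c) * (1 - ‖z‖ * s) := by
    nlinarith [mul_nonneg (by linarith : (0:ℝ) ≤ 1 - c) (by linarith : (0:ℝ) ≤ 1 - ‖z‖),
      mul_nonneg hr0 (by linarith : (0:ℝ) ≤ (1-c) - c*τ - (1-c)*s)]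
  have hkey : c * ‖T‖ ≤ (1-c) * ‖Q‖ := by
    calc c * ‖T‖ ≤ c * (‖z‖ * τ) := mul_le_mul_of_nonneg_left hTn hc0.le
      _ ≤ (1-c) * (1 - ‖z‖ * s) := h6
      _ ≤ (1-c) * ‖Q‖ := mul_le_mul_of_nonneg_left hQn (by linarith)
  -- nonvanishing
  have hQT : 0 < ‖Q + T‖ := by
    have h := norm_add_le (Q + T) (-T)
    simp only [add_neg_cancel_right] at h
    rw [norm_neg] at h
    have hrs : ‖z‖ * (s + τ) ≤ ‖z‖ * 1 :=
      mul_le_mul_of_nonneg_left (le_trans hSt hSB1) hr0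
    have hrs2 : ‖z‖ * s + ‖z‖ * τ = ‖z‖ * (s + τ) := by ring
    have hz1 : ‖z‖ * 1 = ‖z‖ := by ring
    linarith [h, hQn, hTn]
  have hE0 : Q + T ≠ 0 := by
    intro h
    rw [h] at hQT
    simp at hQT
  -- final computation
  rw [hE]
  have hnsq : 0 < Complex.normSq (Q + T) := Complex.normSq_pos.2 hE0
  rw [Complex.div_re, ← add_div, le_div_iff₀ hnsq]
  have hq2 : ‖Q‖^2 = Q.re^2 + Q.im^2 := by
    rw [Complex.sq_norm, Complex.normSq_apply]; ring
  have ht2 : ‖T‖^2 = T.re^2 + T.im^2 := by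
    rw [Complex.sq_norm, Complex.normSq_apply]; ring
  have hX : |Q.re*T.re + Q.im*T.im| ≤ ‖Q‖ * ‖T‖ := by
    have h := Complex.abs_re_le_norm (Q * (starRingEnd ℂ) T)
    rw [Complex.mul_re, Complex.conj_re, Complex.conj_im, norm_mul, Complex.norm_conj] at h
    calc |Q.re*T.re + Q.im*T.im| = |Q.re * T.re - Q.im * -T.im| := by ring_nf
      _ ≤ ‖Q‖ * ‖T‖ := h
  have hX1 := (abs_le.1 hX).1
  have hX2 := (abs_le.1 hX).2
  have pf1 : 0 ≤ (‖Q‖ + ‖T‖) * ((1-c)*‖Q‖ - c*‖T‖) :=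
    mul_nonneg (by positivity) (by linarith)
  have pf2 : 0 ≤ (2*c - 1) * (‖Q‖*‖T‖ - (Q.re*T.re + Q.im*T.im)) :=
    mul_nonneg (by linarith) (by linarith)
  simp only [Complex.normSq_apply, Complex.add_re, Complex.add_im]
  nlinarith [pf1, pf2, hq2, ht2]
end

section
/- For every z in the open unit disk 𝔻 with z ≠ 0, Re( sinh(√z) / √z ) ≥ 1/4, where √z denotes the principal square root of z. -/
open Complex Finset

lemma sinh_sub_self_bound {w : ℂ} (hw : ‖w‖ ≤ 1) :
    ‖Complex.sinh w - w‖ ≤ (2 / 9) * ‖w‖ := by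
  have hA := Complex.exp_bound hw (by norm_num : 0 < 3)
  have hw' : ‖-w‖ ≤ 1 := by simpa using hw
  have hB := Complex.exp_bound hw' (by norm_num : 0 < 3)
  simp only [Finset.sum_range_succ, Finset.sum_range_zero] at hA hB
  norm_num [Nat.factorial] at hA hB
  have key : Complex.sinh w - w
      = ((Complex.exp w - (1 + w + w ^ 2 / 2)) - (Complex.exp (-w) - (1 + -w + w ^ 2 / 2))) / 2 := by
    simp only [Complex.sinh]; ring
  rw [key, norm_div]
  have htri := norm_sub_le (Complex.exp w - (1 + w + w ^ 2 / 2))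
    (Complex.exp (-w) - (1 + -w + w ^ 2 / 2))
  have hcube : ‖w‖ ^ 3 ≤ ‖w‖ := by
    calc ‖w‖ ^ 3 = ‖w‖ ^ 2 * ‖w‖ := by ring
      _ ≤ 1 * ‖w‖ := by
          have := norm_nonneg w
          nlinarith
      _ = ‖w‖ := one_mul _
  simp only [Complex.norm_ofNat]
  rw [div_le_iff₀ (by norm_num : (0:ℝ) < 2)]
  nlinarith [norm_nonneg w]

theorem re_sinh_sqrt_div_sqrt_ge (z : ℂ) (hz : ‖z‖ < 1) (hz0 : z ≠ 0) :
    (1 / 4 : ℝ) ≤ (Complex.sinh (z ^ (1 / 2 : ℂ)) / z ^ (1 / 2 : ℂ)).re := by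
  set w := z ^ (1 / 2 : ℂ) with hwdef
  have hw0 : w ≠ 0 := by
    simp [hwdef, Complex.cpow_eq_zero_iff, hz0]
  have hwn : ‖w‖ ≤ 1 := by
    have h12 : (1 / 2 : ℂ) = ((1 / 2 : ℝ) : ℂ) := by norm_num
    rw [hwdef, h12, norm_cpow_real]
    exact Real.rpow_le_one (norm_nonneg z) hz.le (by norm_num)
  have hb := sinh_sub_self_bound hwn
  have hsplit : Complex.sinh w / w = 1 + (Complex.sinh w - w) / w := by
    field_simp
    ring
  rw [hsplit, Complex.add_re, Complex.one_re]
  set u := (Complex.sinh w - w) / w with hu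
  have hre : -(‖u‖) ≤ u.re :=
    (neg_le_neg (Complex.abs_re_le_norm u)).trans (neg_abs_le _)
  have habsu : ‖u‖ ≤ 2 / 9 := by
    rw [hu, norm_div]
    rw [div_le_iff₀ (norm_pos_iff.mpr hw0)]
    linarith
  linarith
end

section
/- For every z in the open unit disk 𝔻 with z ≠ 0, Re( (cosh(√z) − 1) / z ) ≥ 5/18, where √z denotes the principal square root of z. -/
theorem re_cosh_sqrt_sub_one_div_ge (z : ℂ) (hz : ‖z‖ < 1) (hz0 : z ≠ 0) :
    (5 / 18 : ℝ) ≤ ((Complex.cosh (z ^ (1 / 2 : ℂ)) - 1) / z).re := by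
  set w : ℂ := z ^ (1 / 2 : ℂ) with hw
  have hw2 : w * w = z := by
    rw [hw, ← Complex.cpow_add _ _ hz0]
    norm_num
  have habsz : ‖z‖ < 1 := hz
  have habsw2 : ‖w‖ ^ 2 = ‖z‖ := by
    rw [← hw2, norm_mul]; ring
  have habsw : ‖w‖ ≤ 1 := by
    nlinarith [norm_nonneg w, norm_nonneg z]
  -- remainder terms
  set S : ℂ := Complex.cosh w - 1 - w ^ 2 / 2 with hS
  have hsum : ∀ v : ℂ, ∑ m ∈ Finset.range 4, v ^ m / m.factorial
      = 1 + v + v ^ 2 / 2 + v ^ 3 / 6 := by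
    intro v
    simp [Finset.sum_range_succ, Nat.factorial]
  have hRw := Complex.exp_bound (x := w) habsw (n := 4) (by norm_num)
  have hRmw := Complex.exp_bound (x := -w) (by simpa using habsw) (n := 4) (by norm_num)
  have hSsplit : S = (Complex.exp w - ∑ m ∈ Finset.range 4, w ^ m / m.factorial
      + (Complex.exp (-w) - ∑ m ∈ Finset.range 4, (-w) ^ m / m.factorial)) / 2 := by
    rw [hS, Complex.cosh, hsum, hsum]
    ring
  have hSbound : ‖S‖ ≤ ‖w‖ ^ 4 * (5 / 96) := by
    rw [hSsplit]
    have h1 : ‖Complex.exp w - ∑ m ∈ Finset.range 4, w ^ m / m.factorial‖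
        ≤ ‖w‖ ^ 4 * (5 * ((24 : ℝ) * 4)⁻¹) := by
      simpa [Nat.factorial] using hRw
    have h2 : ‖Complex.exp (-w) - ∑ m ∈ Finset.range 4, (-w) ^ m / m.factorial‖
        ≤ ‖w‖ ^ 4 * (5 * ((24 : ℝ) * 4)⁻¹) := by
      simpa [Nat.factorial] using hRmw
    calc ‖(Complex.exp w - ∑ m ∈ Finset.range 4, w ^ m / m.factorial
          + (Complex.exp (-w) - ∑ m ∈ Finset.range 4, (-w) ^ m / m.factorial)) / 2‖
        ≤ (‖Complex.exp w - ∑ m ∈ Finset.range 4, w ^ m / m.factorial‖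
          + ‖Complex.exp (-w) - ∑ m ∈ Finset.range 4, (-w) ^ m / m.factorial‖) / 2 := by
          rw [norm_div]
          simp only [Complex.norm_two]
          gcongr
          exact norm_add_le _ _
      _ ≤ ‖w‖ ^ 4 * (5 / 96) := by
          rw [div_le_iff₀ (by norm_num)]
          nlinarith
  -- rewrite the main quantity
  have hkey : (Complex.cosh w - 1) / z = 1 / 2 + S / z := by
    have : Complex.cosh w - 1 = z / 2 + S := by
      rw [hS]; rw [show w ^ 2 = z by rw [← hw2]; ring]; ring
    rw [this, add_div]
    congr 1
    field_simp
  rw [hkey]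
  have hre : (1 / 2 + S / z : ℂ).re = 1 / 2 + (S / z).re := by simp
  rw [hre]
  have hSz : ‖S / z‖ ≤ 5 / 96 := by
    rw [norm_div, div_le_iff₀ (norm_pos_iff.mpr hz0)]
    calc ‖S‖ ≤ ‖w‖ ^ 4 * (5 / 96) := hSbound
      _ = ‖z‖ ^ 2 * (5 / 96) := by rw [← habsw2]; ring
      _ ≤ ‖z‖ * (5 / 96) := by
          nlinarith [norm_nonneg z]
      _ = 5 / 96 * ‖z‖ := by ring
  have hge : -(5 / 96 : ℝ) ≤ (S / z).re := by
    have := Complex.abs_re_le_norm (S / z)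
    have := abs_le.1 (this.trans' (le_refl _))
    cases' abs_le.1 (Complex.abs_re_le_norm (S / z)) with h1 h2
    linarith
  linarith
end

section
/- For every z in the open unit disk 𝔻 with z ≠ 0, Re( z / (cosh(√z) − 1) ) ≥ 18/13, where √z denotes the principal square root of z. -/
open Complex Nat

lemma fact_ge24 (n : ℕ) : (24 : ℝ) * 30 ^ n ≤ (2 * n + 4)! := by
  induction n with
  | zero => norm_num [Nat.factorial]
  | succ k ih =>
    have h : (2 * (k + 1) + 4)! = ((2 * k + 6) * ((2 * k + 5) * (2 * k + 4)!) : ℕ) := by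
      have h1 : 2 * (k + 1) + 4 = (2 * k + 5) + 1 := by ring
      rw [h1, Nat.factorial_succ]
      have h2 : 2 * k + 5 = (2 * k + 4) + 1 := by ring
      rw [h2, Nat.factorial_succ]
    rw [h]
    push_cast
    have h30 : (30 : ℝ) ≤ (2 * (k:ℝ) + 6) * (2 * (k:ℝ) + 5) := by
      have : (0:ℝ) ≤ (k:ℝ) := Nat.cast_nonneg k
      nlinarith
    have hc : (0:ℝ) ≤ ((2 * k + 4)! : ℝ) := by positivity
    rw [pow_succ]
    nlinarith [mul_le_mul_of_nonneg_right h30 hc,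
      mul_le_mul_of_nonneg_left ih (by norm_num : (0:ℝ) ≤ 30)]

theorem re_div_cosh_sqrt_sub_one_ge (z : ℂ) (hz : ‖z‖ < 1) (hz0 : z ≠ 0) :
    (18 / 13 : ℝ) ≤ (z / (Complex.cosh (z ^ (1 / 2 : ℂ)) - 1)).re := by
  set s : ℂ := z ^ (1 / 2 : ℂ) with hs
  have harg : (Complex.log z * (1/2 : ℂ)).im = z.arg / 2 := by
    simp [Complex.log_im, Complex.mul_im, Complex.log_re]
    ring
  have hs2 : s ^ 2 = z := by
    rw [hs, ← Complex.cpow_natCast, ← Complex.cpow_mul]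
    · norm_num
    · rw [harg]
      nlinarith [Complex.neg_pi_lt_arg z, Real.pi_pos, Complex.arg_le_pi z]
    · rw [harg]
      nlinarith [Complex.neg_pi_lt_arg z, Real.pi_pos, Complex.arg_le_pi z]
  have h1 : HasSum (fun n : ℕ => z ^ n / ((2 * n)! : ℂ)) (Complex.cosh s) := by
    have := Complex.hasSum_cosh s
    simpa [pow_mul, hs2] using this
  have h2 : HasSum (fun n : ℕ => z ^ (n + 1) / ((2 * (n + 1))! : ℂ))
      (Complex.cosh s - 1) := by
    have := (hasSum_nat_add_iff' (f := fun n : ℕ => z ^ n / ((2 * n)! : ℂ)) 1).mpr h1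
    simpa [Nat.factorial] using this
  set w : ℂ := (Complex.cosh s - 1) / z with hw
  have hzw : Complex.cosh s - 1 = z * w := by
    rw [hw, mul_div_cancel₀]; exact hz0
  have h3 : HasSum (fun n : ℕ => z ^ n / ((2 * n + 2)! : ℂ)) w := by
    have h4 := h2.div_const z
    rw [← hw] at h4
    have heq : (fun n : ℕ => z ^ (n + 1) / ((2 * (n + 1))! : ℂ) / z)
        = fun n : ℕ => z ^ n / ((2 * n + 2)! : ℂ) := by
      funext n
      have he : 2 * (n + 1) = 2 * n + 2 := by ring
      rw [he, pow_succ, mul_comm (z ^ n) z, mul_div_assoc, mul_comm z _, mul_div_assoc,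
        div_self hz0, mul_one]
    rwa [heq] at h4
  -- shift off the constant 1/2 term
  have h5 : HasSum (fun n : ℕ => z ^ (n + 1) / ((2 * (n + 1) + 2)! : ℂ)) (w - 1/2) := by
    have h5' := (hasSum_nat_add_iff' (f := fun n : ℕ => z ^ n / ((2 * n + 2)! : ℂ)) 1).mpr h3
    have h12 : (∑ i ∈ Finset.range 1, z ^ i / ((2 * i + 2)! : ℂ)) = 1/2 := by
      simp [Nat.factorial]
      norm_num
    rwa [h12] at h5'
  -- geometric bound
  have hgeo : HasSum (fun n : ℕ => (1/24 : ℝ) * (1/30) ^ n * ‖z‖) ((5/116) * ‖z‖) := by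
    have hg := hasSum_geometric_of_lt_one (by norm_num : (0:ℝ) ≤ 1/30) (by norm_num : (1/30:ℝ) < 1)
    have h' := (hg.mul_left (1/24)).mul_right ‖z‖
    convert h' using 1
    norm_num
    · rfl
    · ring
  have hnormw : ‖w - 1/2‖ ≤ (5/116) * ‖z‖ := by
    refine h5.norm_le_of_bounded hgeo fun n => ?_
    have hz1 : ‖z‖ ≤ 1 := le_of_lt hz
    have hzn : ‖z‖ ^ n ≤ 1 := pow_le_one₀ (norm_nonneg z) hz1
    have hfact : (24 : ℝ) * 30 ^ n ≤ ((2 * (n + 1) + 2)! : ℝ) := by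
      have := fact_ge24 n
      have he : 2 * (n + 1) + 2 = 2 * n + 4 := by ring
      rw [he]; exact this
    have hfpos : (0:ℝ) < ((2 * (n + 1) + 2)! : ℝ) := by positivity
    rw [norm_div, norm_pow]
    have h30 : (0:ℝ) < 24 * 30 ^ n := by positivity
    calc ‖z‖ ^ (n + 1) / ‖(((2 * (n + 1) + 2)! : ℕ) : ℂ)‖
        ≤ ‖z‖ ^ n * ‖z‖ / (24 * 30 ^ n) := by
          rw [pow_succ]
          apply div_le_div₀ (by positivity) le_rfl h30
          · simpa [Complex.norm_natCast] using hfact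
      _ = (‖z‖ ^ n / (24 * 30 ^ n)) * ‖z‖ := by ring
      _ ≤ (1 / (24 * 30 ^ n)) * ‖z‖ := by
          apply mul_le_mul_of_nonneg_right _ (norm_nonneg z)
          gcongr
      _ = 1/24 * (1/30) ^ n * ‖z‖ := by
          rw [one_div, mul_inv, ← one_div, ← one_div, div_pow]
          ring_nf
  have hnw : ‖w - 1/2‖ ≤ 5/116 := by
    calc ‖w - 1/2‖ ≤ (5/116) * ‖z‖ := hnormw
      _ ≤ (5/116) * 1 := by nlinarith [norm_nonneg z]
      _ = 5/116 := by ring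
  -- real part and norm of w
  have hre : (53/116 : ℝ) ≤ w.re := by
    have h6 : |(w - 1/2).re| ≤ ‖w - 1/2‖ := Complex.abs_re_le_norm _
    have h7 : (w - 1/2).re = w.re - 1/2 := by simp
    rw [h7] at h6
    have := abs_le.mp (h6.trans hnw)
    linarith [this.1]
  have hnorm : ‖w‖ ≤ 63/116 := by
    calc ‖w‖ = ‖(w - 1/2) + 1/2‖ := by ring_nf
      _ ≤ ‖w - 1/2‖ + ‖(1/2 : ℂ)‖ := norm_add_le _ _
      _ ≤ 5/116 + 1/2 := by
          gcongr
          simp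
      _ = 63/116 := by norm_num
  have hw0 : w ≠ 0 := by
    intro h
    rw [h] at hre
    norm_num at hre
  have hfinal : z / (Complex.cosh s - 1) = w⁻¹ := by
    rw [hzw]
    field_simp
  rw [hfinal, Complex.inv_re]
  have hnsq : Complex.normSq w ≤ (63/116) ^ 2 := by
    have hsq : Complex.normSq w = ‖w‖ ^ 2 := by
      rw [Complex.normSq_eq_norm_sq]
    rw [hsq]
    exact pow_le_pow_left₀ (norm_nonneg w) hnorm 2
  have hnsqpos : 0 < Complex.normSq w := Complex.normSq_pos.mpr hw0
  rw [le_div_iff₀ hnsqpos]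
  nlinarith [hre, hnsq, hnsqpos]
end

section
/- For every z in the open unit disk 𝔻 with z ≠ 0, Re( (sinh(√z) − √z) / (z√z) ) ≥ 11/96, where √z denotes the principal square root of z. -/
open Complex Finset

theorem re_sinh_sqrt_sub_sqrt_div_ge (z : ℂ) (hz : ‖z‖ < 1) (hz0 : z ≠ 0) :
    (11 / 96 : ℝ) ≤
      ((Complex.sinh (z ^ (1 / 2 : ℂ)) - z ^ (1 / 2 : ℂ)) / (z * z ^ (1 / 2 : ℂ))).re := by
  set w : ℂ := z ^ (1 / 2 : ℂ) with hw
  have hw2 : w ^ 2 = z := by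
    rw [hw, show (1/2 : ℂ) = ((2:ℕ) : ℂ)⁻¹ by norm_num]
    exact Complex.cpow_nat_inv_pow z two_ne_zero
  have hw0 : w ≠ 0 := by
    intro h
    apply hz0
    rw [← hw2, h]; ring
  have hwa : ‖w‖ ≤ 1 := by
    have h2 : ‖w‖ ^ 2 = ‖z‖ := by
      rw [← hw2]; simp [map_pow]
    nlinarith [norm_nonneg w]
  have hwpos : 0 < ‖w‖ := norm_pos_iff.mpr hw0
  -- remainder bound
  have key : ‖Complex.sinh w - w - w ^ 3 / 6‖ ≤ ‖w‖ ^ 3 / 100 := by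
    have h1 := Complex.exp_bound hwa (n := 5) (by norm_num)
    have h2 := Complex.exp_bound (x := -w) (by simpa using hwa) (n := 5) (by norm_num)
    have hsum : Complex.sinh w - w - w ^ 3 / 6 =
        ((Complex.exp w - ∑ m ∈ range 5, w ^ m / m.factorial) -
          (Complex.exp (-w) - ∑ m ∈ range 5, (-w) ^ m / m.factorial)) / 2 := by
      rw [Complex.sinh]
      simp [Finset.sum_range_succ, Nat.factorial]
      ring
    have hconst : ((Nat.succ 5 : ℝ)) * ((Nat.factorial 5 : ℝ) * (5:ℕ))⁻¹ = 1/100 := by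
      norm_num [Nat.factorial]
    rw [hconst] at h1 h2
    simp only [norm_neg] at h2
    have htri := norm_sub_le (Complex.exp w - ∑ m ∈ range 5, w ^ m / m.factorial)
      (Complex.exp (-w) - ∑ m ∈ range 5, (-w) ^ m / m.factorial)
    have habs5 : ‖w‖ ^ 5 ≤ ‖w‖ ^ 3 := by
      nlinarith [pow_le_one₀ (n := 2) (norm_nonneg w) hwa, norm_nonneg w,
        pow_nonneg (norm_nonneg w) 3]
    rw [hsum, norm_div, Complex.norm_two]
    nlinarith
  have hz_w3 : z * w = w ^ 3 := by rw [← hw2]; ring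
  rw [hz_w3]
  have hsplit : (Complex.sinh w - w) / w ^ 3 = 1/6 + (Complex.sinh w - w - w ^ 3 / 6) / w ^ 3 := by
    field_simp
    ring
  rw [hsplit]
  have hre : ((1:ℂ)/6 + (Complex.sinh w - w - w ^ 3 / 6) / w ^ 3).re
      = 1/6 + ((Complex.sinh w - w - w ^ 3 / 6) / w ^ 3).re := by
    simp
  rw [hre]
  have hbound : ‖(Complex.sinh w - w - w ^ 3 / 6) / w ^ 3‖ ≤ 1/100 := by
    rw [norm_div, norm_pow]
    rw [div_le_iff₀ (by positivity)]
    calc ‖Complex.sinh w - w - w ^ 3 / 6‖ ≤ ‖w‖ ^ 3 / 100 := key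
      _ = 1/100 * ‖w‖ ^ 3 := by ring
  have hre2 : -(1/100 : ℝ) ≤ ((Complex.sinh w - w - w ^ 3 / 6) / w ^ 3).re := by
    have := Complex.abs_re_le_norm ((Complex.sinh w - w - w ^ 3 / 6) / w ^ 3)
    have h3 := neg_abs_le ((Complex.sinh w - w - w ^ 3 / 6) / w ^ 3).re
    linarith
  linarith
end

section
/- For every z in the open unit disk 𝔻 with z ≠ 0, Re( z√z / (sinh(√z) − √z) ) ≥ 32/7, where √z denotes the principal square root of z. -/
open Complex Nat

private lemma fact_ge_aux (n : ℕ) : 120 * 42 ^ n ≤ (2 * n + 5)! := by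
  induction n with
  | zero => norm_num [Nat.factorial]
  | succ n ih =>
    have h1 : 2 * (n + 1) + 5 = (2 * n + 5) + 2 := by ring
    rw [h1]
    have h2 : ((2 * n + 5) + 2)! = (2 * n + 7) * ((2 * n + 6) * (2 * n + 5)!) := by
      have e1 : (2 * n + 5) + 2 = (2 * n + 6) + 1 := by ring
      have e2 : 2 * n + 6 = (2 * n + 5) + 1 := by ring
      rw [e1, Nat.factorial_succ, e2, Nat.factorial_succ, ← e2]
    rw [h2]
    calc 120 * 42 ^ (n + 1) = 42 * (120 * 42 ^ n) := by ring
    _ ≤ 42 * (2 * n + 5)! := by exact Nat.mul_le_mul_left _ ih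
    _ ≤ (2 * n + 7) * ((2 * n + 6) * (2 * n + 5)!) := by
        calc 42 * (2 * n + 5)! = 7 * (6 * (2 * n + 5)!) := by ring
        _ ≤ (2 * n + 7) * ((2 * n + 6) * (2 * n + 5)!) := by
            apply Nat.mul_le_mul (by omega)
            exact Nat.mul_le_mul_right _ (by omega)

theorem re_div_sinh_sqrt_sub_sqrt_ge (z : ℂ) (hz : ‖z‖ < 1) (hz0 : z ≠ 0) :
    (32 / 7 : ℝ) ≤
      (z * z ^ (1 / 2 : ℂ) / (Complex.sinh (z ^ (1 / 2 : ℂ)) - z ^ (1 / 2 : ℂ))).re := by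
  set w : ℂ := z ^ (1 / 2 : ℂ) with hw
  have hw2 : w * w = z := by
    rw [hw, ← Complex.cpow_add _ _ hz0]
    norm_num
  have hw0 : w ≠ 0 := by
    intro h
    apply hz0
    rw [← hw2, h, mul_zero]
  set f : ℂ := (Complex.sinh w - w) / w ^ 3 with hf
  -- f is the sum of z^n/(2n+3)!
  have hs1 : HasSum (fun n : ℕ => w ^ (2 * (n + 1) + 1) / ((2 * (n + 1) + 1)! : ℂ))
      (Complex.sinh w - w) := by
    have := (hasSum_nat_add_iff' (f := fun n : ℕ => w ^ (2 * n + 1) / ((2 * n + 1)! : ℂ)) 1).mpr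
      (Complex.hasSum_sinh w)
    simpa [Nat.factorial] using this
  have hsf : HasSum (fun n : ℕ => z ^ n / ((2 * n + 3)! : ℂ)) f := by
    have h := hs1.div_const (w ^ 3)
    rw [hf]
    convert h using 2 with n
    · rfl
    have h1 : 2 * (n + 1) + 1 = 2 * n + 3 := by ring
    rw [h1, div_div, mul_comm ((2 * n + 3)! : ℂ) (w ^ 3), ← div_div]
    congr 1
    rw [← hw2]
    have : w * w = w ^ 2 := by ring
    rw [this, ← pow_mul]
    rw [eq_div_iff (pow_ne_zero 3 hw0), ← pow_add]
  -- tail bound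
  have htail : HasSum (fun n : ℕ => z ^ (n + 1) / ((2 * (n + 1) + 3)! : ℂ)) (f - 1 / 6) := by
    have := (hasSum_nat_add_iff' (f := fun n : ℕ => z ^ n / ((2 * n + 3)! : ℂ)) 1).mpr hsf
    convert this using 1
    · rfl
    norm_num [Nat.factorial]
  have hgeo : HasSum (fun n : ℕ => (1 / 120 : ℝ) * (1 / 42) ^ n)
      ((1 / 120) * (1 - 1 / 42)⁻¹) :=
    (hasSum_geometric_of_lt_one (by norm_num) (by norm_num)).mul_left _
  have habs : ‖f - 1 / 6‖ ≤ 7 / 820 := by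
    have hb : ∀ n : ℕ, ‖z ^ (n + 1) / ((2 * (n + 1) + 3)! : ℂ)‖ ≤ (1 / 120 : ℝ) * (1 / 42) ^ n := by
      intro n
      rw [norm_div, norm_pow]
      have hzn : ‖z‖ ^ (n + 1) ≤ 1 := by
        apply pow_le_one₀ (norm_nonneg z) hz.le
      have hfac : ‖((2 * (n + 1) + 3)! : ℂ)‖ = ((2 * n + 5)! : ℝ) := by
        have : 2 * (n + 1) + 3 = 2 * n + 5 := by ring
        rw [this]
        simp
      rw [hfac]
      have hfp : (0 : ℝ) < (120 * 42 ^ n : ℝ) := by positivity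
      have h120 : (120 * 42 ^ n : ℝ) ≤ ((2 * n + 5)! : ℝ) := by
        exact_mod_cast fact_ge_aux n
      calc ‖z‖ ^ (n + 1) / ((2 * n + 5)! : ℝ)
          ≤ 1 / (120 * 42 ^ n : ℝ) := div_le_div₀ (by norm_num) hzn hfp h120
        _ = (1 / 120 : ℝ) * (1 / 42) ^ n := by
            rw [div_pow, one_pow]
            field_simp
    have := tsum_of_norm_bounded hgeo hb
    rw [htail.tsum_eq] at this
    calc ‖f - 1 / 6‖ ≤ (1 / 120 : ℝ) * (1 - 1 / 42)⁻¹ := this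
      _ = 7 / 820 := by norm_num
  -- numeric bounds on f
  have hre16 : |(f - 1 / 6).re| ≤ 7 / 820 := (Complex.abs_re_le_norm _).trans habs
  have hre' : (f - 1 / 6).re = f.re - 1 / 6 := by simp [Complex.sub_re]
  have hre : (389 : ℝ) / 2460 ≤ f.re := by
    rw [hre'] at hre16
    have := abs_le.mp hre16
    linarith [this.1]
  have hnf : ‖f‖ ≤ 431 / 2460 := by
    have : f = (f - 1 / 6) + 1 / 6 := by ring
    rw [this]
    calc ‖(f - 1 / 6) + 1 / 6‖ ≤ ‖f - 1 / 6‖ + ‖(1 / 6 : ℂ)‖ := norm_add_le _ _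
      _ ≤ 7 / 820 + 1 / 6 := by
          apply add_le_add habs
          rw [norm_div, norm_one]
          simp
      _ = 431 / 2460 := by norm_num
  have hf0 : f ≠ 0 := by
    intro h
    rw [h] at hre
    simp at hre
    linarith
  -- express the quotient as 1/f
  have hsw : Complex.sinh w - w = f * w ^ 3 := by
    rw [hf, div_mul_cancel₀ _ (pow_ne_zero 3 hw0)]
  have hzw : z * w = w ^ 3 := by rw [← hw2]; ring
  have hquot : z * w / (Complex.sinh w - w) = 1 / f := by
    rw [hsw, hzw, mul_comm f (w ^ 3), ← div_div, div_self (pow_ne_zero 3 hw0)]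
  rw [hquot, one_div, Complex.inv_re]
  have hns : Complex.normSq f ≤ (431 / 2460) ^ 2 := by
    rw [Complex.normSq_eq_norm_sq]
    have h0 : (0:ℝ) ≤ 431 / 2460 := by norm_num
    exact pow_le_pow_left₀ (norm_nonneg f) hnf 2
  have hnspos : 0 < Complex.normSq f := Complex.normSq_pos.mpr hf0
  rw [le_div_iff₀ hnspos]
  nlinarith [hns, hre, hnspos]
end

section
/- For every z in the open unit disk 𝔻 with z ≠ 0, Re( (√z cosh(√z) − sinh(√z)) / (z√z) ) ≥ 1/24, where √z denotes the principal square root of z. -/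
open Complex Finset

theorem re_sqrt_cosh_sub_sinh_div_ge (z : ℂ) (hz : ‖z‖ < 1) (hz0 : z ≠ 0) :
    (1 / 24 : ℝ) ≤
      ((z ^ (1 / 2 : ℂ) * Complex.cosh (z ^ (1 / 2 : ℂ)) - Complex.sinh (z ^ (1 / 2 : ℂ))) /
        (z * z ^ (1 / 2 : ℂ))).re := by
  set w : ℂ := z ^ (1 / 2 : ℂ) with hw
  have hww : w * w = z := by
    rw [hw, ← Complex.cpow_add _ _ hz0]
    norm_num
  have hw0 : w ≠ 0 := by
    intro h
    apply hz0
    rw [← hww, h, mul_zero]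
  have hwz : ‖w‖ * ‖w‖ = ‖z‖ := by rw [← norm_mul, hww]
  have hwn : ‖w‖ < 1 := by nlinarith [norm_nonneg w]
  have hP : ∀ x : ℂ, (∑ m ∈ range 6, x ^ m / m.factorial) =
      1 + x + x ^ 2 / 2 + x ^ 3 / 6 + x ^ 4 / 24 + x ^ 5 / 120 := by
    intro x
    simp [Finset.sum_range_succ, Nat.factorial]
    try ring
  have habs : ‖w‖ = ‖w‖ := rfl
  have habsn : ‖-w‖ = ‖w‖ := by
    rw [norm_neg]
  have hb1 := Complex.exp_bound (x := w) (by rw [habs]; exact hwn.le) (n := 6) (by norm_num)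
  have hb2 := Complex.exp_bound (x := -w) (by rw [habsn]; exact hwn.le) (n := 6) (by norm_num)
  rw [hP] at hb1 hb2
  set R1 : ℂ := Complex.exp w - (1 + w + w ^ 2 / 2 + w ^ 3 / 6 + w ^ 4 / 24 + w ^ 5 / 120) with hR1
  set R2 : ℂ := Complex.exp (-w) -
      (1 + -w + (-w) ^ 2 / 2 + (-w) ^ 3 / 6 + (-w) ^ 4 / 24 + (-w) ^ 5 / 120) with hR2
  rw [habs] at hb1
  rw [habsn] at hb2
  norm_num [Nat.factorial] at hb1 hb2
  set E : ℂ := ((w - 1) * R1 + (w + 1) * R2) / 2 with hE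
  have hkey : w * Complex.cosh w - Complex.sinh w = w ^ 3 / 3 + w ^ 5 / 30 + E := by
    rw [Complex.cosh, Complex.sinh, hE, hR1, hR2]
    ring
  have hEbound : ‖E‖ ≤ 7 / 2160 * ‖w‖ ^ 3 := by
    have hm1 : ‖w - 1‖ ≤ 2 := by
      calc ‖w - 1‖ ≤ ‖w‖ + ‖(1 : ℂ)‖ := norm_sub_le _ _
        _ ≤ 2 := by rw [norm_one]; linarith
    have hm2 : ‖w + 1‖ ≤ 2 := by
      calc ‖w + 1‖ ≤ ‖w‖ + ‖(1 : ℂ)‖ := norm_add_le _ _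
        _ ≤ 2 := by rw [norm_one]; linarith
    have h1 : ‖(w - 1) * R1‖ ≤ 2 * (‖w‖ ^ 6 * (7 / 4320)) := by
      rw [norm_mul]
      exact mul_le_mul hm1 hb1 (norm_nonneg _) (by norm_num)
    have h2 : ‖(w + 1) * R2‖ ≤ 2 * (‖w‖ ^ 6 * (7 / 4320)) := by
      rw [norm_mul]
      exact mul_le_mul hm2 hb2 (norm_nonneg _) (by norm_num)
    have h3 : ‖E‖ ≤ (‖(w - 1) * R1‖ + ‖(w + 1) * R2‖) / 2 := by
      rw [hE]
      calc ‖((w - 1) * R1 + (w + 1) * R2) / 2‖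
          = ‖(w - 1) * R1 + (w + 1) * R2‖ / 2 := by
            rw [norm_div]; norm_num
        _ ≤ (‖(w - 1) * R1‖ + ‖(w + 1) * R2‖) / 2 := by
            gcongr; exact norm_add_le _ _
    have hw6 : ‖w‖ ^ 6 ≤ ‖w‖ ^ 3 :=
      pow_le_pow_of_le_one (norm_nonneg w) hwn.le (by norm_num)
    nlinarith [norm_nonneg w]
  have hzw : z * w = w ^ 3 := by rw [← hww]; ring
  have heq : (w * Complex.cosh w - Complex.sinh w) / (z * w)
      = 1 / 3 + w ^ 2 / 30 + E / w ^ 3 := by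
    rw [hzw, hkey]
    field_simp
  rw [heq]
  have hre : (1 / 3 + w ^ 2 / 30 + E / w ^ 3 : ℂ).re
      = 1 / 3 + (w ^ 2 / 30 : ℂ).re + (E / w ^ 3).re := by
    simp
  rw [hre]
  have hre' : ∀ (x : ℂ) (b : ℝ), ‖x‖ ≤ b → -b ≤ x.re := by
    intro x b h
    have h2 : |x.re| ≤ b := le_trans (Complex.abs_re_le_norm x) h
    linarith [abs_le.mp h2 |>.1]
  have h1 : -(1 / 30 : ℝ) ≤ (w ^ 2 / 30 : ℂ).re := by
    apply hre'
    rw [norm_div, norm_pow]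
    have h30 : ‖(30 : ℂ)‖ = 30 := by
      norm_num [Complex.norm_ofNat]
    rw [h30]
    have : ‖w‖ ^ 2 ≤ 1 := pow_le_one₀ (norm_nonneg w) hwn.le
    linarith
  have h2 : -(7 / 2160 : ℝ) ≤ (E / w ^ 3).re := by
    apply hre'
    rw [norm_div, norm_pow]
    rw [div_le_iff₀ (pow_pos (norm_pos_iff.mpr hw0) 3)]
    have hw3 : ‖w‖ ^ 3 ≤ 1 := pow_le_one₀ (norm_nonneg w) hwn.le
    nlinarith [norm_nonneg E, pow_nonneg (norm_nonneg w) 3]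
  linarith
end

section
/- For every z in the open unit disk 𝔻 with z ≠ 0, Re( z√z / (√z cosh(√z) − sinh(√z)) ) ≥ 8/5, where √z denotes the principal square root of z. -/
open Complex

theorem re_div_sqrt_cosh_sub_sinh_ge (z : ℂ) (hz : ‖z‖ < 1) (hz0 : z ≠ 0) :
    (8 / 5 : ℝ) ≤
      (z * z ^ (1 / 2 : ℂ) /
        (z ^ (1 / 2 : ℂ) * Complex.cosh (z ^ (1 / 2 : ℂ)) - Complex.sinh (z ^ (1 / 2 : ℂ)))).re := by
  set w : ℂ := z ^ (1 / 2 : ℂ) with hw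
  have hw2 : w * w = z := by
    rw [hw, ← Complex.cpow_add _ _ hz0]
    norm_num
  have hw0 : w ≠ 0 := by
    intro h
    exact hz0 (by rw [← hw2, h, mul_zero])
  have hwle : ‖w‖ ≤ 1 := by
    have habs : ‖w‖ = ‖z‖ ^ (1 / 2 : ℝ) := by
      rw [hw, show ((1 : ℂ)/2) = ((1/2 : ℝ) : ℂ) by norm_num]
      exact Complex.norm_cpow_real z (1/2)
    rw [habs]
    exact Real.rpow_le_one (norm_nonneg _) hz.le (by norm_num)
  -- Taylor remainder bounds for exp
  have hE4 : ∀ x : ℂ, ‖x‖ ≤ 1 →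
      ‖Complex.exp x - (1 + x + x ^ 2 / 2 + x ^ 3 / 6)‖ ≤
        ‖x‖ ^ 4 * (5 / 96) := by
    intro x hx
    have h := Complex.exp_bound hx (n := 4) (by norm_num)
    have hsum : (∑ m ∈ Finset.range 4, x ^ m / m.factorial) = 1 + x + x ^ 2 / 2 + x ^ 3 / 6 := by
      norm_num [Finset.sum_range_succ, Nat.factorial]
    rw [hsum] at h
    convert h using 2
    norm_num [Nat.factorial]
  have hE5 : ∀ x : ℂ, ‖x‖ ≤ 1 →
      ‖Complex.exp x - (1 + x + x ^ 2 / 2 + x ^ 3 / 6 + x ^ 4 / 24)‖ ≤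
        ‖x‖ ^ 5 * (1 / 100) := by
    intro x hx
    have h := Complex.exp_bound hx (n := 5) (by norm_num)
    have hsum : (∑ m ∈ Finset.range 5, x ^ m / m.factorial)
        = 1 + x + x ^ 2 / 2 + x ^ 3 / 6 + x ^ 4 / 24 := by
      norm_num [Finset.sum_range_succ, Nat.factorial]
    rw [hsum] at h
    convert h using 2
    norm_num [Nat.factorial]
  have hnegw : ‖-w‖ ≤ 1 := by rwa [norm_neg]
  -- remainder bound for cosh
  have hRc : ‖Complex.cosh w - (1 + w ^ 2 / 2)‖ ≤ ‖w‖ ^ 4 * (5 / 96) := by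
    have hid : Complex.cosh w - (1 + w ^ 2 / 2)
        = ((Complex.exp w - (1 + w + w ^ 2 / 2 + w ^ 3 / 6))
          + (Complex.exp (-w) - (1 + (-w) + (-w) ^ 2 / 2 + (-w) ^ 3 / 6))) / 2 := by
      simp only [Complex.cosh]
      ring
    have t1 := hE4 w hwle
    have t2 := hE4 (-w) hnegw
    rw [norm_neg] at t2
    have tri := norm_add_le (Complex.exp w - (1 + w + w ^ 2 / 2 + w ^ 3 / 6))
      (Complex.exp (-w) - (1 + (-w) + (-w) ^ 2 / 2 + (-w) ^ 3 / 6))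
    rw [hid, norm_div, Complex.norm_two]
    linarith
  -- remainder bound for sinh
  have hRs : ‖Complex.sinh w - (w + w ^ 3 / 6)‖ ≤ ‖w‖ ^ 5 * (1 / 100) := by
    have hid : Complex.sinh w - (w + w ^ 3 / 6)
        = ((Complex.exp w - (1 + w + w ^ 2 / 2 + w ^ 3 / 6 + w ^ 4 / 24))
          - (Complex.exp (-w) - (1 + (-w) + (-w) ^ 2 / 2 + (-w) ^ 3 / 6 + (-w) ^ 4 / 24))) / 2 := by
      simp only [Complex.sinh]
      ring
    have t1 := hE5 w hwle
    have t2 := hE5 (-w) hnegw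
    rw [norm_neg] at t2
    have tri := norm_sub_le (Complex.exp w - (1 + w + w ^ 2 / 2 + w ^ 3 / 6 + w ^ 4 / 24))
      (Complex.exp (-w) - (1 + (-w) + (-w) ^ 2 / 2 + (-w) ^ 3 / 6 + (-w) ^ 4 / 24))
    rw [hid, norm_div, Complex.norm_two]
    linarith
  set D : ℂ := w * Complex.cosh w - Complex.sinh w with hD
  -- key bound
  have hkey : ‖3 * D - w ^ 3‖ ≤ 149 / 800 * ‖w‖ ^ 3 := by
    have hid : 3 * D - w ^ 3
        = 3 * w * (Complex.cosh w - (1 + w ^ 2 / 2)) - 3 * (Complex.sinh w - (w + w ^ 3 / 6)) := by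
      rw [hD]; ring
    rw [hid]
    have h1 : ‖3 * w * (Complex.cosh w - (1 + w ^ 2 / 2))‖
        ≤ 3 * ‖w‖ * (‖w‖ ^ 4 * (5 / 96)) := by
      rw [norm_mul, norm_mul]
      simp only [Complex.norm_ofNat]
      gcongr
    have h2 : ‖3 * (Complex.sinh w - (w + w ^ 3 / 6))‖
        ≤ 3 * (‖w‖ ^ 5 * (1 / 100)) := by
      rw [norm_mul]
      simp only [Complex.norm_ofNat]
      gcongr
    have htri := norm_sub_le (3 * w * (Complex.cosh w - (1 + w ^ 2 / 2)))
      (3 * (Complex.sinh w - (w + w ^ 3 / 6)))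
    have hw5 : ‖w‖ ^ 5 ≤ ‖w‖ ^ 3 :=
      pow_le_pow_of_le_one (norm_nonneg _) hwle (by norm_num)
    nlinarith [norm_nonneg w, pow_nonneg (norm_nonneg w) 3]
  have hw3pos : 0 < ‖w‖ ^ 3 := pow_pos (norm_pos_iff.mpr hw0) 3
  have hw3abs : ‖w ^ 3‖ = ‖w‖ ^ 3 := norm_pow _ _
  have hDne : D ≠ 0 := by
    intro h
    have h2 : ‖3 * D - w ^ 3‖ = ‖w‖ ^ 3 := by
      rw [h, mul_zero, zero_sub, norm_neg, hw3abs]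
    rw [h2] at hkey
    nlinarith
  set u : ℂ := 3 * D / w ^ 3 with hu
  have hu1 : ‖u - 1‖ ≤ 149 / 800 := by
    have : u - 1 = (3 * D - w ^ 3) / w ^ 3 := by
      rw [hu]
      field_simp
    rw [this, norm_div, hw3abs, div_le_iff₀ hw3pos]
    linarith [hkey]
  have hure : (651 : ℝ) / 800 ≤ u.re := by
    have h1 : |(u - 1).re| ≤ ‖u - 1‖ := Complex.abs_re_le_norm _
    have h2 : (u - 1).re = u.re - 1 := by simp
    rw [h2] at h1
    have := abs_le.mp h1
    linarith [this.1]
  have huabs : ‖u‖ ≤ 949 / 800 := by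
    calc ‖u‖ = ‖(u - 1) + 1‖ := by ring_nf
      _ ≤ ‖u - 1‖ + ‖1‖ := norm_add_le _ _
      _ ≤ 149 / 800 + 1 := by rw [norm_one]; linarith
      _ = 949 / 800 := by norm_num
  have hnsq : Complex.normSq u ≤ (949 / 800) ^ 2 := by
    rw [← Complex.sq_norm]
    have := norm_nonneg u
    nlinarith
  have hnsqpos : 0 < Complex.normSq u := by
    rw [Complex.normSq_pos]
    intro h
    rw [h] at hure
    simp at hure
    linarith
  -- rewrite the goal
  have hgoal : z * w / D = 3 / u := by
    rw [hu, show z * w = w ^ 3 by rw [← hw2]; ring]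
    have h3 : (3 : ℂ) ≠ 0 := by norm_num
    have hw3 : w ^ 3 ≠ 0 := pow_ne_zero 3 hw0
    field_simp
  rw [hgoal]
  rw [Complex.div_re]
  have h3re : ((3 : ℂ)).re = 3 := by norm_num
  have h3im : ((3 : ℂ)).im = 0 := by norm_num
  rw [h3re, h3im]
  rw [zero_mul, zero_div, add_zero]
  rw [le_div_iff₀ hnsqpos]
  nlinarith
end

section
/- Let α ≥ 1 and β ≥ (3+√17)/2 be real numbers. Then for every z in the open unit disk 𝔻, Re( 𝔼'_{α,β}(z) ) > 0, where 𝔼'_{α,β}(z) = 1 + Σ_{n=1}^∞ (n+1) (Γ(β)/Γ(αn+β)) z^{n}. -/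
theorem re_deriv_mittagLeffler_pos (α β : ℝ) (hα : 1 ≤ α)
    (hβ : (3 + Real.sqrt 17) / 2 ≤ β) (z : ℂ) (hz : ‖z‖ < 1) :
    0 < (normalizedMittagLefflerDeriv α β z).re := by
  have h17 : (4 : ℝ) ≤ Real.sqrt 17 := by
    nlinarith [Real.sq_sqrt (by norm_num : (0:ℝ) ≤ 17), Real.sqrt_nonneg 17]
  have hβ35 : (3.5 : ℝ) ≤ β := by linarith
  have hβ0 : (0 : ℝ) < β := by linarith
  set r : ℝ := 3 / (2 * (β + 1)) with hr
  have hr0 : (0:ℝ) ≤ r := by positivity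
  have hr1 : r < 1 := by
    rw [hr, div_lt_one (by linarith)]; linarith
  have hgb : 0 < Real.Gamma β := Real.Gamma_pos_of_pos hβ0
  -- step 1: bound b n = (n+2) Γβ / Γ(n+1+β) ≤ (2/β) r^n
  have hb : ∀ n : ℕ, ((n : ℝ) + 2) * (Real.Gamma β / Real.Gamma ((n : ℝ) + 1 + β))
      ≤ (2 / β) * r ^ n := by
    intro n
    induction n with
    | zero =>
      rw [show ((0:ℕ):ℝ) + 1 + β = β + 1 from by push_cast; ring,
        Real.Gamma_add_one (ne_of_gt hβ0), pow_zero, mul_one]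
      have e : Real.Gamma β / (β * Real.Gamma β) = 1 / β := by
        field_simp
      rw [e]
      push_cast
      rw [show ((0:ℝ) + 2) * (1/β) = 2/β from by ring]
    | succ n ih =>
      have hc : ((n+1:ℕ):ℝ) = (n:ℝ) + 1 := by push_cast; ring
      rw [hc, show (n:ℝ) + 1 + 1 + β = ((n:ℝ) + 1 + β) + 1 from by ring,
        Real.Gamma_add_one (by positivity)]
      set A := Real.Gamma ((n:ℝ) + 1 + β) with hA
      have hA0 : 0 < A := Real.Gamma_pos_of_pos (by positivity)
      have key : ((n:ℝ) + 1 + 2) * (Real.Gamma β / (((n:ℝ) + 1 + β) * A))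
          ≤ r * (((n:ℝ) + 2) * (Real.Gamma β / A)) := by
        rw [hr]
        have e1 : ((n:ℝ) + 1 + 2) * (Real.Gamma β / (((n:ℝ) + 1 + β) * A))
            = (((n:ℝ) + 3) * Real.Gamma β) / (((n:ℝ) + 1 + β) * A) := by ring
        have e2 : 3 / (2 * (β + 1)) * (((n:ℝ) + 2) * (Real.Gamma β / A))
            = (3 * ((n:ℝ) + 2) * Real.Gamma β) / ((2 * (β + 1)) * A) := by
          field_simp
        rw [e1, e2, div_le_div_iff₀ (by positivity) (by positivity)]
        have hn : (0:ℝ) ≤ (n:ℝ) := Nat.cast_nonneg n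
        have hG : (0:ℝ) ≤ Real.Gamma β * A := by positivity
        nlinarith [mul_nonneg (mul_nonneg hn hn) hG, mul_nonneg hn hG,
          mul_nonneg (mul_nonneg hβ0.le hn) hG]
      calc ((n:ℝ) + 1 + 2) * (Real.Gamma β / (((n:ℝ) + 1 + β) * A))
          ≤ r * (((n:ℝ) + 2) * (Real.Gamma β / A)) := key
        _ ≤ r * ((2 / β) * r ^ n) := mul_le_mul_of_nonneg_left ih hr0
        _ = (2 / β) * r ^ (n + 1) := by ring
  -- step 2: compare with actual coefficients via monotonicity of Γ on [2,∞)
  have hcoef : ∀ n : ℕ, ((n : ℝ) + 2) * (Real.Gamma β / Real.Gamma (α * ((n:ℝ) + 1) + β))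
      ≤ (2 / β) * r ^ n := by
    intro n
    refine le_trans ?_ (hb n)
    have hn : (0:ℝ) ≤ (n:ℝ) := Nat.cast_nonneg n
    apply mul_le_mul_of_nonneg_left _ (by positivity)
    apply div_le_div_of_nonneg_left hgb.le (Real.Gamma_pos_of_pos (by positivity))
    apply Real.Gamma_strictMonoOn_Ici.monotoneOn
    · exact Set.mem_Ici.2 (by linarith)
    · exact Set.mem_Ici.2 (by nlinarith)
    · nlinarith
  -- step 3: norm estimates
  have hz0 : (0:ℝ) ≤ ‖z‖ := norm_nonneg z
  set f : ℕ → ℂ := fun n => ((n : ℂ) + 2) * ((Real.Gamma β / Real.Gamma (α * (n + 1) + β) : ℝ) : ℂ)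
      * z ^ (n + 1) with hf
  have hnorm : ∀ n : ℕ, ‖f n‖ ≤ ‖z‖ * ((2 / β) * r ^ n) := by
    intro n
    have hgp : 0 < Real.Gamma (α * ((n:ℝ) + 1) + β) := by
      apply Real.Gamma_pos_of_pos
      nlinarith [Nat.cast_nonneg (α := ℝ) n]
    have h1 : ‖f n‖ = ((n:ℝ) + 2) * (Real.Gamma β / Real.Gamma (α * ((n:ℝ) + 1) + β)) * ‖z‖ ^ (n+1) := by
      rw [hf]
      simp only [norm_mul, norm_pow, Complex.norm_real, Real.norm_eq_abs]
      rw [abs_of_nonneg (show (0:ℝ) ≤ Real.Gamma β / Real.Gamma (α * ((n:ℝ)+1) + β) from by positivity),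
        show ((n:ℂ) + 2) = (((n + 2 : ℕ)) : ℂ) from by push_cast; ring, Complex.norm_natCast]
      push_cast; ring
    rw [h1]
    have hzp : ‖z‖ ^ (n+1) ≤ ‖z‖ := by
      calc ‖z‖ ^ (n+1) = ‖z‖ * ‖z‖ ^ n := by ring
        _ ≤ ‖z‖ * 1 := mul_le_mul_of_nonneg_left (pow_le_one₀ hz0 hz.le) hz0
        _ = ‖z‖ := mul_one _
    calc ((n:ℝ) + 2) * (Real.Gamma β / Real.Gamma (α * ((n:ℝ) + 1) + β)) * ‖z‖ ^ (n+1)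
        ≤ ((2 / β) * r ^ n) * ‖z‖ ^ (n+1) :=
          mul_le_mul_of_nonneg_right (hcoef n) (by positivity)
      _ ≤ ((2 / β) * r ^ n) * ‖z‖ := mul_le_mul_of_nonneg_left hzp (by positivity)
      _ = ‖z‖ * ((2 / β) * r ^ n) := by ring
  have hsum_g : Summable (fun n : ℕ => ‖z‖ * ((2 / β) * r ^ n)) :=
    (((summable_geometric_of_lt_one hr0 hr1).mul_left _).mul_left _)
  have hsum_f : Summable (fun n : ℕ => ‖f n‖) :=
    Summable.of_nonneg_of_le (fun n => norm_nonneg _) hnorm hsum_g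
  have htsum_g : ∑' n : ℕ, ‖z‖ * ((2 / β) * r ^ n) = ‖z‖ * ((2 / β) * (1 - r)⁻¹) := by
    rw [tsum_mul_left, tsum_mul_left, tsum_geometric_of_lt_one hr0 hr1]
  have hfrac : (2 / β) * (1 - r)⁻¹ ≤ 1 := by
    have e : (2 / β) * (1 - r)⁻¹ = 4 * (β + 1) / (β * (2 * β - 1)) := by
      rw [hr]; field_simp; ring
    rw [e, div_le_one (by nlinarith)]
    nlinarith
  have hT : ‖∑' n : ℕ, f n‖ < 1 := by
    calc ‖∑' n : ℕ, f n‖ ≤ ∑' n : ℕ, ‖f n‖ := norm_tsum_le_tsum_norm hsum_f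
      _ ≤ ∑' n : ℕ, ‖z‖ * ((2 / β) * r ^ n) := Summable.tsum_le_tsum hnorm hsum_f hsum_g
      _ = ‖z‖ * ((2 / β) * (1 - r)⁻¹) := htsum_g
      _ ≤ ‖z‖ * 1 := mul_le_mul_of_nonneg_left hfrac hz0
      _ = ‖z‖ := mul_one _
      _ < 1 := hz
  have hEq : normalizedMittagLefflerDeriv α β z = 1 + ∑' n : ℕ, f n := rfl
  rw [hEq, Complex.add_re, Complex.one_re]
  have habs : |(∑' n : ℕ, f n).re| < 1 :=
    lt_of_le_of_lt (Complex.abs_re_le_norm _) hT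
  have := neg_abs_le ((∑' n : ℕ, f n).re)
  linarith [abs_lt.1 habs |>.1]
end

section
/- Let α ≥ 1 and β ≥ (1+√5)/2 be real numbers, let A_n = Γ(β)/Γ(αn+β) for n ≥ 1, and let m be a nonnegative integer. Then Σ_{n=1}^m A_n + (β²/(β+1)) Σ_{n=m+1}^∞ A_n ≤ 1. -/
open Real Finset

private lemma gamma_pow_le (β : ℝ) (hb : 0 < β) (m : ℕ) : ∀ k : ℕ,
    Real.Gamma ((m : ℝ) + 1 + β) * (β + m + 1) ^ k ≤ Real.Gamma ((m : ℝ) + 1 + k + β) := by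
  intro k
  induction k with
  | zero => norm_num
  | succ k ih =>
      have hm : (0:ℝ) ≤ m := Nat.cast_nonneg m
      have hk : (0:ℝ) ≤ k := Nat.cast_nonneg k
      have hpos : (0:ℝ) < (m : ℝ) + 1 + k + β := by linarith
      have hrec : Real.Gamma ((m : ℝ) + 1 + (k + 1) + β)
          = ((m : ℝ) + 1 + k + β) * Real.Gamma ((m : ℝ) + 1 + k + β) := by
        rw [show (m : ℝ) + 1 + (k + 1) + β = ((m : ℝ) + 1 + k + β) + 1 by ring]
        exact Real.Gamma_add_one (ne_of_gt hpos)
      have hΓpos : 0 < Real.Gamma ((m : ℝ) + 1 + k + β) := Real.Gamma_pos_of_pos hpos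
      have h1 : (β + m + 1) * (Real.Gamma ((m : ℝ) + 1 + β) * (β + m + 1) ^ k)
          ≤ ((m : ℝ) + 1 + k + β) * Real.Gamma ((m : ℝ) + 1 + k + β) := by
        apply mul_le_mul (by linarith) ih (by positivity) (by linarith)
      push_cast
      calc Real.Gamma ((m : ℝ) + 1 + β) * (β + m + 1) ^ (k + 1)
          = (β + m + 1) * (Real.Gamma ((m : ℝ) + 1 + β) * (β + m + 1) ^ k) := by ring
        _ ≤ ((m : ℝ) + 1 + k + β) * Real.Gamma ((m : ℝ) + 1 + k + β) := h1
        _ = Real.Gamma ((m : ℝ) + 1 + (k + 1) + β) := hrec.symm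
        _ = Real.Gamma ((m : ℝ) + 1 + ((k : ℝ) + 1) + β) := by norm_num

private lemma aux_main (β : ℝ) (h32 : (3:ℝ)/2 ≤ β) (hsq : β + 1 ≤ β ^ 2) (m : ℕ) :
    (∑ n ∈ Finset.Icc 1 m, Real.Gamma β / Real.Gamma ((n : ℝ) + β)) +
      β ^ 2 / (β + 1) *
        (Real.Gamma β / Real.Gamma ((m : ℝ) + 1 + β) * ((β + m + 1) / (β + m))) ≤ 1 := by
  have hb : 0 < β := by linarith
  have hΓβ : 0 < Real.Gamma β := Real.Gamma_pos_of_pos hb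
  induction m with
  | zero =>
      rw [Finset.Icc_eq_empty (by omega)]
      simp only [Finset.sum_empty, zero_add, Nat.cast_zero]
      rw [show ((1:ℝ) + β) = β + 1 by ring, Real.Gamma_add_one (ne_of_gt hb)]
      have hΓne : Real.Gamma β ≠ 0 := ne_of_gt hΓβ
      have : β ^ 2 / (β + 1) * (Real.Gamma β / (β * Real.Gamma β) * ((β + 0 + 1) / (β + 0))) = 1 := by
        field_simp
        ring
      rw [this]
  | succ m ih =>
      have hm : (0:ℝ) ≤ m := Nat.cast_nonneg m
      have hpos1 : (0:ℝ) < (m : ℝ) + 1 + β := by linarith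
      have hΓ1 : 0 < Real.Gamma ((m : ℝ) + 1 + β) := Real.Gamma_pos_of_pos hpos1
      have hrec : Real.Gamma ((m : ℝ) + 1 + 1 + β)
          = ((m : ℝ) + 1 + β) * Real.Gamma ((m : ℝ) + 1 + β) := by
        rw [show (m : ℝ) + 1 + 1 + β = ((m : ℝ) + 1 + β) + 1 by ring]
        exact Real.Gamma_add_one (ne_of_gt hpos1)
      rw [Finset.sum_Icc_succ_top (by omega : 1 ≤ m + 1)]
      push_cast
      have key : Real.Gamma β / Real.Gamma ((m : ℝ) + 1 + β) +
          β ^ 2 / (β + 1) *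
            (Real.Gamma β / Real.Gamma ((m : ℝ) + 1 + 1 + β) * ((β + ((m:ℝ) + 1) + 1) / (β + ((m:ℝ) + 1))))
          ≤ β ^ 2 / (β + 1) *
            (Real.Gamma β / Real.Gamma ((m : ℝ) + 1 + β) * ((β + m + 1) / (β + m))) := by
        rw [hrec]
        have hne1 : Real.Gamma ((m : ℝ) + 1 + β) ≠ 0 := ne_of_gt hΓ1
        have hne2 : β + 1 ≠ 0 := by positivity
        have hne3 : (m : ℝ) + 1 + β ≠ 0 := ne_of_gt hpos1
        have hne4 : β + (m:ℝ) ≠ 0 := by positivity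
        have hne5 : β + ((m:ℝ) + 1) ≠ 0 := by positivity
        rw [← sub_nonneg]
        have hfac : (β + 1) * ((β + (m:ℝ)) ^ 3 + 2 * (β + m) ^ 2 + (β + m))
            ≤ β ^ 2 * ((β + (m:ℝ)) ^ 3 + 2 * (β + m) ^ 2 + (β + m)) := by
          apply mul_le_mul_of_nonneg_right hsq
          positivity
        have hgoal : 0 ≤ β ^ 2 / (β + 1) *
            (Real.Gamma β / Real.Gamma ((m : ℝ) + 1 + β) * ((β + m + 1) / (β + m))) -
            (Real.Gamma β / Real.Gamma ((m : ℝ) + 1 + β) +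
              β ^ 2 / (β + 1) *
                (Real.Gamma β / (((m:ℝ) + 1 + β) * Real.Gamma ((m : ℝ) + 1 + β)) *
                  ((β + ((m:ℝ) + 1) + 1) / (β + ((m:ℝ) + 1))))) := by
          have heq : β ^ 2 / (β + 1) *
              (Real.Gamma β / Real.Gamma ((m : ℝ) + 1 + β) * ((β + m + 1) / (β + m))) -
              (Real.Gamma β / Real.Gamma ((m : ℝ) + 1 + β) +
                β ^ 2 / (β + 1) *
                  (Real.Gamma β / (((m:ℝ) + 1 + β) * Real.Gamma ((m : ℝ) + 1 + β)) *
                    ((β + ((m:ℝ) + 1) + 1) / (β + ((m:ℝ) + 1)))))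
              = (Real.Gamma β * (β ^ 2 * ((β + (m:ℝ)) ^ 3 + 2 * (β + m) ^ 2 + (β + m) + 1)
                  - (β + 1) * ((β + (m:ℝ)) ^ 3 + 2 * (β + m) ^ 2 + (β + m)))) /
                ((β + 1) * (β + (m:ℝ)) * ((β + m + 1) ^ 2) * Real.Gamma ((m : ℝ) + 1 + β)) := by
            have hne6 : β + (m:ℝ) + 1 ≠ 0 := by positivity
            field_simp
            ring
          rw [heq]
          apply div_nonneg
          · nlinarith [hfac, sq_nonneg β, hΓβ.le]
          · positivity
        exact hgoal
      linarith [ih]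

private lemma beta_facts (β : ℝ) (hβ : (1 + Real.sqrt 5) / 2 ≤ β) :
    (3:ℝ)/2 ≤ β ∧ β + 1 ≤ β ^ 2 := by
  have h5 : Real.sqrt 5 ^ 2 = 5 := Real.sq_sqrt (by norm_num)
  have h2 : (2:ℝ) ≤ Real.sqrt 5 := by nlinarith [Real.sqrt_nonneg 5]
  refine ⟨by linarith, ?_⟩
  nlinarith [Real.sqrt_nonneg 5, sq_nonneg (2 * β - 1 - Real.sqrt 5)]

theorem partial_sum_plus_tail_le_one (α β : ℝ) (hα : 1 ≤ α)
    (hβ : (1 + Real.sqrt 5) / 2 ≤ β) (m : ℕ) :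
    (∑ n ∈ Finset.Icc 1 m, Real.Gamma β / Real.Gamma (α * n + β)) +
      β ^ 2 / (β + 1) *
        ∑' k : ℕ, Real.Gamma β / Real.Gamma (α * (m + 1 + k) + β) ≤ 1 := by
  obtain ⟨h32, hsq⟩ := beta_facts β hβ
  have hb : 0 < β := by linarith
  have hΓβ : 0 < Real.Gamma β := Real.Gamma_pos_of_pos hb
  have hm : (0:ℝ) ≤ m := Nat.cast_nonneg m
  have hC : 0 ≤ β ^ 2 / (β + 1) := by positivity
  set r : ℝ := 1 / (β + m + 1) with hr
  have hr0 : 0 ≤ r := by positivity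
  have hr1 : r < 1 := by
    rw [hr, div_lt_one (by linarith)]; linarith
  have hΓ1 : 0 < Real.Gamma ((m : ℝ) + 1 + β) := Real.Gamma_pos_of_pos (by linarith)
  -- termwise tail bound
  have hterm : ∀ k : ℕ, Real.Gamma β / Real.Gamma (α * ((m:ℝ) + 1 + k) + β)
      ≤ (Real.Gamma β / Real.Gamma ((m : ℝ) + 1 + β)) * r ^ k := by
    intro k
    have hk : (0:ℝ) ≤ k := Nat.cast_nonneg k
    have harg1 : (2:ℝ) ≤ (m : ℝ) + 1 + k + β := by linarith
    have hle : (m : ℝ) + 1 + k + β ≤ α * ((m:ℝ) + 1 + k) + β := by nlinarith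
    have hmono : Real.Gamma ((m : ℝ) + 1 + k + β) ≤ Real.Gamma (α * ((m:ℝ) + 1 + k) + β) :=
      Real.Gamma_strictMonoOn_Ici.monotoneOn harg1 (le_trans harg1 hle) hle
    have hΓ2 : 0 < Real.Gamma ((m : ℝ) + 1 + k + β) := Real.Gamma_pos_of_pos (by linarith)
    have hΓ3 : 0 < Real.Gamma (α * ((m:ℝ) + 1 + k) + β) := Real.Gamma_pos_of_pos (by linarith)
    have hpow := gamma_pow_le β hb m k
    calc Real.Gamma β / Real.Gamma (α * ((m:ℝ) + 1 + k) + β)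
        ≤ Real.Gamma β / Real.Gamma ((m : ℝ) + 1 + k + β) :=
          div_le_div_of_nonneg_left hΓβ.le hΓ2 hmono
      _ ≤ Real.Gamma β / (Real.Gamma ((m : ℝ) + 1 + β) * (β + m + 1) ^ k) :=
          div_le_div_of_nonneg_left hΓβ.le (by positivity) hpow
      _ = (Real.Gamma β / Real.Gamma ((m : ℝ) + 1 + β)) * r ^ k := by
          rw [hr, div_pow, one_pow]
          field_simp
  have hsum_geo : Summable (fun k : ℕ => (Real.Gamma β / Real.Gamma ((m : ℝ) + 1 + β)) * r ^ k) :=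
    (summable_geometric_of_lt_one hr0 hr1).mul_left _
  have hpos : ∀ k : ℕ, 0 ≤ Real.Gamma β / Real.Gamma (α * ((m:ℝ) + 1 + k) + β) := by
    intro k
    have hk : (0:ℝ) ≤ k := Nat.cast_nonneg k
    have hp : 0 < α * ((m:ℝ) + 1 + k) + β := by nlinarith
    exact div_nonneg hΓβ.le (Real.Gamma_pos_of_pos hp).le
  have hsummable : Summable (fun k : ℕ => Real.Gamma β / Real.Gamma (α * ((m:ℝ) + 1 + k) + β)) :=
    Summable.of_nonneg_of_le hpos hterm hsum_geo
  have hne4 : β + (m:ℝ) ≠ 0 := by positivity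
  have hne5 : β + (m:ℝ) + 1 ≠ 0 := by positivity
  have htsum : (∑' k : ℕ, Real.Gamma β / Real.Gamma (α * ((m:ℝ) + 1 + k) + β))
      ≤ Real.Gamma β / Real.Gamma ((m : ℝ) + 1 + β) * ((β + m + 1) / (β + m)) := by
    calc (∑' k : ℕ, Real.Gamma β / Real.Gamma (α * ((m:ℝ) + 1 + k) + β))
        ≤ ∑' k : ℕ, (Real.Gamma β / Real.Gamma ((m : ℝ) + 1 + β)) * r ^ k :=
          Summable.tsum_le_tsum hterm hsummable hsum_geo
      _ = (Real.Gamma β / Real.Gamma ((m : ℝ) + 1 + β)) * (1 - r)⁻¹ := by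
          rw [tsum_mul_left, tsum_geometric_of_lt_one hr0 hr1]
      _ = Real.Gamma β / Real.Gamma ((m : ℝ) + 1 + β) * ((β + m + 1) / (β + m)) := by
          congr 1
          rw [hr, show (1 : ℝ) - 1 / (β + m + 1) = (β + m) / (β + m + 1) by field_simp; ring]
          rw [inv_div]
  have hfin : (∑ n ∈ Finset.Icc 1 m, Real.Gamma β / Real.Gamma (α * n + β))
      ≤ ∑ n ∈ Finset.Icc 1 m, Real.Gamma β / Real.Gamma ((n:ℝ) + β) := by
    apply Finset.sum_le_sum
    intro n hn
    have hn1 : 1 ≤ n := (Finset.mem_Icc.mp hn).1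
    have hn1' : (1:ℝ) ≤ n := by exact_mod_cast hn1
    have harg : (2:ℝ) ≤ (n:ℝ) + β := by linarith
    have hle : (n:ℝ) + β ≤ α * n + β := by nlinarith
    have hmono := Real.Gamma_strictMonoOn_Ici.monotoneOn harg (le_trans harg hle) hle
    exact div_le_div_of_nonneg_left hΓβ.le (Real.Gamma_pos_of_pos (by linarith)) hmono
  have hmain := aux_main β h32 hsq m
  have h2 := mul_le_mul_of_nonneg_left htsum hC
  linarith
end

section
/- Let α ≥ 1 and β ≥ (3+√17)/2 be real numbers, let A_n = Γ(β)/Γ(αn+β) for n ≥ 1, and let m be a nonnegative integer. Then Σ_{n=1}^m (n+1) A_n + (β²/(3β+2)) Σ_{n=m+1}^∞ (n+1) A_n ≤ 1. -/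
open Real Finset

/-- Lower bound for Gamma: `Γ(β + (n+1)) ≥ Γ(β) · β · (β+1)^n` for `β ≥ 3`. -/
lemma gamma_lower (β : ℝ) (hβ : 3 ≤ β) (n : ℕ) :
    Real.Gamma β * (β * (β + 1) ^ n) ≤ Real.Gamma (β + (n + 1)) := by
  have hβ0 : (0:ℝ) < β := by linarith
  induction n with
  | zero =>
      simp only [Nat.cast_zero, pow_zero, mul_one, zero_add]
      rw [Real.Gamma_add_one hβ0.ne']
      linarith [mul_comm (Real.Gamma β) β]
  | succ n ih =>
      have h1 : Real.Gamma (β + (n + 1 + 1)) = (β + (n + 1)) * Real.Gamma (β + (n + 1)) := by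
        have : β + ((n:ℝ) + 1 + 1) = (β + (n + 1)) + 1 := by ring
        rw [this, Real.Gamma_add_one (by positivity)]
      have hge : (β + 1) * (Real.Gamma β * (β * (β + 1) ^ n)) ≤
          (β + (n + 1)) * Real.Gamma (β + (n + 1)) := by
        have hpos : (0:ℝ) < Real.Gamma β * (β * (β + 1) ^ n) := by
          have := Real.Gamma_pos_of_pos hβ0
          positivity
        have h2 : (β + 1) ≤ β + (n + 1) := by
          have : (0:ℝ) ≤ n := Nat.cast_nonneg n
          linarith
        calc (β + 1) * (Real.Gamma β * (β * (β + 1) ^ n))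
            ≤ (β + (n + 1)) * (Real.Gamma β * (β * (β + 1) ^ n)) := by
              exact mul_le_mul_of_nonneg_right h2 hpos.le
          _ ≤ (β + (n + 1)) * Real.Gamma (β + (n + 1)) := by
              apply mul_le_mul_of_nonneg_left ih (by positivity)
      push_cast
      push_cast at hge h1
      rw [h1]
      calc Real.Gamma β * (β * (β + 1) ^ (n + 1))
          = (β + 1) * (Real.Gamma β * (β * (β + 1) ^ n)) := by ring
        _ ≤ _ := hge

/-- Key termwise bound. -/
lemma term_bound (α β : ℝ) (hα : 1 ≤ α) (hβ : 3 ≤ β) (n : ℕ) :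
    Real.Gamma β / Real.Gamma (α * (n + 1) + β) ≤ (1 / β) * (1 / (β + 1)) ^ n := by
  have hβ0 : (0:ℝ) < β := by linarith
  have hΓβ : 0 < Real.Gamma β := Real.Gamma_pos_of_pos hβ0
  have hn1 : (1:ℝ) ≤ (n:ℝ) + 1 := by
    have : (0:ℝ) ≤ n := Nat.cast_nonneg n
    linarith
  have hmono : Real.Gamma (β + (n + 1)) ≤ Real.Gamma (α * (n + 1) + β) := by
    rcases eq_or_lt_of_le (show β + ((n:ℝ) + 1) ≤ α * (n + 1) + β by nlinarith) with h | h
    · rw [h]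
    · exact (Real.Gamma_strictMonoOn_Ici (by simp [Set.mem_Ici]; linarith)
        (by simp [Set.mem_Ici]; nlinarith) h).le
  have hlow : Real.Gamma β * (β * (β + 1) ^ n) ≤ Real.Gamma (α * (n + 1) + β) :=
    (gamma_lower β hβ n).trans hmono
  have hpos : (0:ℝ) < Real.Gamma β * (β * (β + 1) ^ n) := by positivity
  have hpos2 : (0:ℝ) < Real.Gamma (α * (n + 1) + β) := lt_of_lt_of_le hpos hlow
  rw [div_le_iff₀ hpos2]
  have : (1 / β) * (1 / (β + 1)) ^ n * (Real.Gamma β * (β * (β + 1) ^ n)) = Real.Gamma β := by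
    field_simp
    rw [← mul_pow, one_div, inv_mul_cancel₀ (by linarith), one_pow]
  calc Real.Gamma β = (1 / β) * (1 / (β + 1)) ^ n * (Real.Gamma β * (β * (β + 1) ^ n)) :=
        this.symm
    _ ≤ (1 / β) * (1 / (β + 1)) ^ n * Real.Gamma (α * (n + 1) + β) := by
        apply mul_le_mul_of_nonneg_left hlow (by positivity)

theorem weighted_partial_sum_plus_tail_le_one (α β : ℝ) (hα : 1 ≤ α)
    (hβ : (3 + Real.sqrt 17) / 2 ≤ β) (m : ℕ) :
    (∑ n ∈ Finset.Icc 1 m, ((n : ℝ) + 1) * (Real.Gamma β / Real.Gamma (α * n + β))) +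
      β ^ 2 / (3 * β + 2) *
        ∑' k : ℕ, ((m + 1 + k : ℕ) + 1 : ℝ) *
          (Real.Gamma β / Real.Gamma (α * (m + 1 + k) + β)) ≤ 1 := by
  have h17 : (3:ℝ) ≤ Real.sqrt 17 := by
    nlinarith [Real.sq_sqrt (show (0:ℝ) ≤ 17 by norm_num), Real.sqrt_nonneg (17:ℝ)]
  have hβ3 : (3:ℝ) ≤ β := by linarith
  have hβ0 : (0:ℝ) < β := by linarith
  have hβsq : 3 * β + 2 ≤ β ^ 2 := by
    have h0 : Real.sqrt 17 ≤ 2 * β - 3 := by linarith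
    have h1 : (17:ℝ) = Real.sqrt 17 ^ 2 := (Real.sq_sqrt (by norm_num)).symm
    nlinarith [Real.sqrt_nonneg (17:ℝ)]
  have hΓβ : 0 < Real.Gamma β := Real.Gamma_pos_of_pos hβ0
  -- the shifted sequence and its geometric majorant
  set h : ℕ → ℝ := fun k => ((k:ℝ) + 2) * (Real.Gamma β / Real.Gamma (α * (k + 1) + β)) with hh
  set x : ℝ := 1 / (β + 1) with hx
  have hx0 : 0 ≤ x := by positivity
  have hx1 : x < 1 := by
    rw [hx, div_lt_one (by linarith)]; linarith
  have hxnorm : ‖x‖ < 1 := by rwa [Real.norm_eq_abs, abs_of_nonneg hx0]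
  set g : ℕ → ℝ := fun k => ((k:ℝ) + 2) * ((1 / β) * x ^ k) with hg
  have hle : ∀ k, h k ≤ g k := by
    intro k
    have hb := term_bound α β hα hβ3 k
    have hk2 : (0:ℝ) ≤ (k:ℝ) + 2 := by positivity
    exact mul_le_mul_of_nonneg_left hb hk2
  have hpos : ∀ k, 0 ≤ h k := by
    intro k
    have hΓpos : 0 < Real.Gamma (α * (k + 1) + β) :=
      Real.Gamma_pos_of_pos (by nlinarith [Nat.cast_nonneg (α := ℝ) k])
    positivity
  -- summability of g and value of its sum
  have hsum1 : HasSum (fun k : ℕ => (k:ℝ) * x ^ k) (x / (1 - x) ^ 2) :=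
    hasSum_coe_mul_geometric_of_norm_lt_one hxnorm
  have hsum2 : HasSum (fun k : ℕ => x ^ k) ((1 - x)⁻¹) :=
    hasSum_geometric_of_lt_one hx0 hx1
  have hsumg : HasSum g ((1 / β) * (x / (1 - x) ^ 2 + 2 * (1 - x)⁻¹)) := by
    have := (hsum1.add (hsum2.mul_left 2)).mul_left (1 / β)
    convert this using 2 with k
    show ((k:ℝ) + 2) * ((1 / β) * x ^ k) = _
    ring
    rfl
  have hSummableh : Summable h := Summable.of_nonneg_of_le hpos hle hsumg.summable
  have hSg : (1 / β) * (x / (1 - x) ^ 2 + 2 * (1 - x)⁻¹) ≤ (3 * β + 2) / β ^ 2 := by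
    have h1x : 1 - x = β / (β + 1) := by
      rw [hx]; field_simp; ring
    have hβ1 : (0:ℝ) < β + 1 := by linarith
    have hLHS : (1 / β) * (x / (1 - x) ^ 2 + 2 * (1 - x)⁻¹)
        = (β + 1) * (2 * β + 1) / β ^ 3 := by
      rw [h1x, hx]
      field_simp
      ring
    rw [hLHS, div_le_div_iff₀ (by positivity) (by positivity)]
    have key : (0:ℝ) ≤ β ^ 2 - β - 1 := by nlinarith
    nlinarith [mul_nonneg (mul_nonneg hβ0.le hβ0.le) key]
  have hS : (∑' k, h k) ≤ (3 * β + 2) / β ^ 2 :=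
    le_trans (Summable.tsum_le_tsum hle hSummableh hsumg.summable)
      (le_of_eq_of_le hsumg.tsum_eq hSg)
  -- rewrite the statement's finite sum
  have hfin : (∑ n ∈ Finset.Icc 1 m, ((n : ℝ) + 1) * (Real.Gamma β / Real.Gamma (α * n + β)))
      = ∑ k ∈ Finset.range m, h k := by
    induction m with
    | zero => simp
    | succ m ih =>
        rw [Finset.sum_Icc_succ_top (by omega), ih, Finset.sum_range_succ]
        congr 1
        simp only [hh]
        push_cast
        ring_nf
  -- rewrite the tail
  have htail : (∑' k : ℕ, ((m + 1 + k : ℕ) + 1 : ℝ) *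
      (Real.Gamma β / Real.Gamma (α * (m + 1 + k) + β))) = ∑' k : ℕ, h (k + m) := by
    apply tsum_congr
    intro k
    simp only [hh]
    push_cast
    ring_nf
  have hsplit : (∑ k ∈ Finset.range m, h k) + (∑' k : ℕ, h (k + m)) = ∑' k, h k :=
    hSummableh.sum_add_tsum_nat_add m
  rw [hfin, htail]
  -- final arithmetic
  set A := ∑ k ∈ Finset.range m, h k with hA
  set T := ∑' k : ℕ, h (k + m) with hT
  have hA0 : 0 ≤ A := Finset.sum_nonneg fun k _ => hpos k
  have hT0 : 0 ≤ T := tsum_nonneg fun k => hpos (k + m)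
  have hc1 : 1 ≤ β ^ 2 / (3 * β + 2) := by
    rw [le_div_iff₀ (by linarith)]; linarith
  have hS' : A + T ≤ (3 * β + 2) / β ^ 2 := by
    rw [hsplit]; exact hS
  have hfinal : β ^ 2 / (3 * β + 2) * (A + T) ≤ 1 := by
    calc β ^ 2 / (3 * β + 2) * (A + T) ≤ β ^ 2 / (3 * β + 2) * ((3 * β + 2) / β ^ 2) :=
          mul_le_mul_of_nonneg_left hS' (by positivity)
      _ = 1 := by field_simp
  calc A + β ^ 2 / (3 * β + 2) * T
      ≤ β ^ 2 / (3 * β + 2) * A + β ^ 2 / (3 * β + 2) * T := by nlinarith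
    _ = β ^ 2 / (3 * β + 2) * (A + T) := by ring
    _ ≤ 1 := hfinal
end
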